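/- arXiv:2501.12938 — 7 statements merged into one kernel-verified Lean document; each statement's English description precedes it below -/
import Mathlib

section
/- (Claim 1, memoryless ingress achievability.) Fix ε ∈ (0,1), λ > 0 and δ > 0. For each n define E^adv_{1|0}(n) as the supremum, over all adversaries A : 𝒳^n × {0,1}^n → 𝒳^n with A(x^n,z^n) agreeing with x^n on every coordinate i with z_i = 0, of the probability that D(P_{A(X^n,Z^n)} ‖ P₁) ≤ λ + δ, where X^n is i.i.d. P₀ and Z^n is i.i.d. Bernoulli(ε) independent of X^n. Then liminf_{n→∞} −(1/n) log E^adv_{1|0}(n) ≥ min over ρ ∈ [0,1] and q,v ∈ Δ with D((1−ρ)q + ρv ‖ P₁) ≤ λ + δ of D₂(ρ‖ε) + (1−ρ)·D(q‖P₀). -/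
open scoped BigOperators ENNReal Classical
open Filter

noncomputable section

/-- The set of probability distributions on a finite alphabet. -/
def simplex (𝒳 : Type*) [Fintype 𝒳] : Set (𝒳 → ℝ) :=
  {p | (∀ x, 0 ≤ p x) ∧ ∑ x, p x = 1}

/-- Kullback–Leibler divergence, with values in `[0,∞]`. -/
def KL {𝒳 : Type*} [Fintype 𝒳] (p q : 𝒳 → ℝ) : ℝ≥0∞ :=
  if ∀ x, q x = 0 → p x = 0 then
    ENNReal.ofReal (∑ x, p x * Real.log (p x / q x))
  else ⊤

/-- KL ball of radius `r` around `p`. -/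
def BKL {𝒳 : Type*} [Fintype 𝒳] (p : 𝒳 → ℝ) (r : ℝ) : Set (𝒳 → ℝ) :=
  {q | q ∈ simplex 𝒳 ∧ KL q p ≤ ENNReal.ofReal r}

/-- Mixture `(1-a) p + a q`. -/
def mix {𝒳 : Type*} (a : ℝ) (p q : 𝒳 → ℝ) : 𝒳 → ℝ :=
  fun x => (1 - a) * p x + a * q x

/-- Binary KL divergence `D₂(ρ‖ε)`. -/
def D2 (ρ ε : ℝ) : ℝ≥0∞ :=
  KL (fun b : Bool => if b then ρ else 1 - ρ) (fun b : Bool => if b then ε else 1 - ε)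

/-- Total variation distance. -/
def dTV {𝒳 : Type*} [Fintype 𝒳] (p q : 𝒳 → ℝ) : ℝ :=
  (∑ x, |p x - q x|) / 2

/-- Empirical type of a string. -/
def typeOf {𝒳 : Type*} [Fintype 𝒳] [DecidableEq 𝒳] {n : ℕ} (x : Fin n → 𝒳) : 𝒳 → ℝ :=
  fun a => ((Finset.univ.filter fun i => x i = a).card : ℝ) / n

/-- i.i.d. probability of a string. -/
def iid {𝒳 : Type*} [Fintype 𝒳] (P : 𝒳 → ℝ) {n : ℕ} (x : Fin n → 𝒳) : ℝ :=
  ∏ i, P (x i)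

/-- Probability of `z` under i.i.d. Bernoulli(ε). -/
def berW (ε : ℝ) {n : ℕ} (z : Fin n → Bool) : ℝ :=
  ∏ i, if z i then ε else 1 - ε

/-- Hamming weight. -/
def wt {n : ℕ} (z : Fin n → Bool) : ℕ :=
  (Finset.univ.filter fun i => z i = true).card

/-- Probability of `z` under the uniform distribution on weight-⌈nε⌉ binary vectors. -/
def unifW (ε : ℝ) {n : ℕ} (z : Fin n → Bool) : ℝ :=
  if wt z = Nat.ceil ((n : ℝ) * ε) then
    (1 : ℝ) / ((Finset.univ.filter fun z' : Fin n → Bool => wt z' = Nat.ceil ((n : ℝ) * ε)).card : ℝ)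
  else 0

/-- `liminf -(1/n) log E(n) ≥ l` (in the extended reals). -/
def ExpLB (E : ℕ → ℝ) (l : ℝ) : Prop :=
  (l : EReal) ≤ Filter.liminf (fun n : ℕ => ((-(Real.log (E n)) / n : ℝ) : EReal)) Filter.atTop

/-- Worst-case error in Claim 1: supremum, over (deterministic) memoryless-ingress
adversaries, of the probability that the type of the corrupted samples lands in the
KL ball `B_KL(P1, t)`, when `X^n` is i.i.d. `P0` and `Z^n` is i.i.d. Bernoulli(ε). -/
def EadvClaim1 {𝒳 : Type*} [Fintype 𝒳] [DecidableEq 𝒳] (P0 P1 : 𝒳 → ℝ) (ε t : ℝ)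
    (n : ℕ) : ℝ :=
  sSup {e : ℝ | ∃ A : (Fin n → 𝒳) → (Fin n → Bool) → Fin n → 𝒳,
    (∀ x z i, z i = false → A x z i = x i) ∧
    e = ∑ x, ∑ z, iid P0 x * berW ε z *
          (if KL (typeOf (A x z)) P1 ≤ ENNReal.ofReal t then (1 : ℝ) else 0)}

def klR {𝒳 : Type*} [Fintype 𝒳] (p q : 𝒳 → ℝ) : ℝ :=
  ∑ x, p x * Real.log (p x / q x)

lemma KL_eq_ofReal {𝒳 : Type*} [Fintype 𝒳] (p q : 𝒳 → ℝ) (hq : ∀ x, 0 < q x) :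
    KL p q = ENNReal.ofReal (klR p q) := by
  rw [KL, if_pos]
  · rfl
  · intro x hx; exact absurd hx (ne_of_gt (hq x))

lemma gibbs {𝒳 : Type*} [Fintype 𝒳] {p q : 𝒳 → ℝ} (hp : p ∈ simplex 𝒳)
    (hq : q ∈ simplex 𝒳) (hqpos : ∀ x, 0 < q x) : 0 ≤ klR p q := by
  classical
  obtain ⟨hp0, hp1⟩ := hp
  obtain ⟨hq0, hq1⟩ := hq
  have hsupp : klR p q = ∑ x ∈ Finset.univ.filter (fun x => p x ≠ 0), p x * Real.log (p x / q x) := by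
    rw [klR]
    rw [Finset.sum_filter_of_ne]
    intro x _ h hpx
    exact h (by rw [hpx]; ring)
  have key : ∀ x ∈ Finset.univ.filter (fun x => p x ≠ 0),
      p x - q x ≤ p x * Real.log (p x / q x) := by
    intro x hx
    have hpx : 0 < p x := lt_of_le_of_ne (hp0 x) (Ne.symm (Finset.mem_filter.mp hx).2)
    have h1 : Real.log (q x / p x) ≤ q x / p x - 1 :=
      Real.log_le_sub_one_of_pos (div_pos (hqpos x) hpx)
    have h2 : Real.log (p x / q x) = - Real.log (q x / p x) := by
      rw [← Real.log_inv]
      congr 1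
      field_simp
    rw [h2]
    have h4 := mul_le_mul_of_nonneg_left h1 (le_of_lt hpx)
    have h3 : p x * (q x / p x - 1) = q x - p x := by field_simp
    nlinarith
  have hs := Finset.sum_le_sum key
  have hps : ∑ x ∈ Finset.univ.filter (fun x => p x ≠ 0), p x = 1 := by
    rw [Finset.sum_filter_of_ne (fun x _ h => h), hp1]
  have hqs : ∑ x ∈ Finset.univ.filter (fun x => p x ≠ 0), q x ≤ 1 := by
    rw [← hq1]
    exact Finset.sum_le_sum_of_subset_of_nonneg (Finset.filter_subset _ _) (fun x _ _ => hq0 x)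
  rw [hsupp]
  rw [Finset.sum_sub_distrib, hps] at hs
  linarith

lemma sumFiberBound {𝒳 ι : Type*} [Fintype 𝒳] [DecidableEq 𝒳] [Fintype ι] [DecidableEq ι]
    (S : Finset ι) (P : 𝒳 → ℝ) (hP1 : ∑ a, P a = 1) (hP0 : ∀ a, 0 < P a)
    (c : 𝒳 → ℕ) (hc : ∑ a, c a = S.card) :
    ∑ x ∈ Finset.univ.filter
        (fun x : ι → 𝒳 => ∀ a, (S.filter fun i => x i = a).card = c a),
      ∏ i, P (x i)
    ≤ Real.exp (-(S.card : ℝ) * klR (fun a => (c a : ℝ) / S.card) P) := by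
  classical
  set m := S.card with hm
  set q : 𝒳 → ℝ := fun a => (c a : ℝ) / m with hqdef
  have hq0 : ∀ a, 0 ≤ q a := fun a => div_nonneg (Nat.cast_nonneg _) (Nat.cast_nonneg _)
  have hczero : ∀ a, c a = 0 → q a = 0 := by intro a h; simp [hqdef, h]
  have hcpos : ∀ a, 0 < c a → 0 < q a := by
    intro a h
    have hm0 : 0 < m := by
      rcases Nat.eq_zero_or_pos m with h0 | h0
      · have := (Finset.sum_eq_zero_iff.mp (by rw [hc, h0])) a (Finset.mem_univ a)
        omega
      · exact h0
    exact div_pos (by exact_mod_cast h) (by exact_mod_cast hm0)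
  have hmq : ∀ a, (c a : ℝ) = m * q a := by
    intro a
    rcases Nat.eq_zero_or_pos (c a) with h | h
    · simp [h, hczero a h]
    · have hm0 : 0 < m := by
        by_contra hcon
        have hm00 : m = 0 := by omega
        have : ∑ a, c a = 0 := by rw [hc, hm00]
        have := (Finset.sum_eq_zero_iff.mp this) a (Finset.mem_univ a)
        omega
      rw [hqdef]
      have : (m : ℝ) ≠ 0 := by positivity
      field_simp
  -- the tilted weight
  set w : ι → 𝒳 → ℝ := fun i a => if i ∈ S then q a else P a with hwdef
  -- total mass of w is 1
  have hwsum : ∑ x : ι → 𝒳, ∏ i, w i (x i) = 1 := by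
    rw [show (Finset.univ : Finset (ι → 𝒳)) = Fintype.piFinset (fun _ => Finset.univ) from
      (Fintype.piFinset_univ).symm, ← Finset.prod_univ_sum]
    · rw [← @Finset.prod_const_one ι ℝ Finset.univ _]
      apply Finset.prod_congr rfl
      intro i _
      by_cases h : i ∈ S
      · simp only [hwdef, h, if_true]
        have hm0 : 0 < m := Finset.card_pos.mpr ⟨i, h⟩
        rw [hqdef]
        rw [← Finset.sum_div]
        rw [← Nat.cast_sum]
        rw [hc]
        field_simp
      · simp only [hwdef, h, if_false]
        exact hP1
  -- per-string identity on the fiber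
  have key : ∀ x : ι → 𝒳, (∀ a, (S.filter fun i => x i = a).card = c a) →
      ∏ i, P (x i) = Real.exp (-(m : ℝ) * klR q P) * ∏ i, w i (x i) := by
    intro x hx
    have hsplitP : ∏ i, P (x i) = (∏ i ∈ S, P (x i)) * ∏ i ∈ Sᶜ, P (x i) :=
      (Finset.prod_mul_prod_compl S _).symm
    have hsplitW : ∏ i, w i (x i) = (∏ i ∈ S, q (x i)) * ∏ i ∈ Sᶜ, P (x i) := by
      rw [← Finset.prod_mul_prod_compl S]
      congr 1
      · exact Finset.prod_congr rfl (fun i hi => by simp [hwdef, hi])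
      · exact Finset.prod_congr rfl (fun i hi => by simp [hwdef, Finset.mem_compl.mp hi])
    -- group products over S by letter
    have hgroup : ∀ f : 𝒳 → ℝ, ∏ i ∈ S, f (x i) = ∏ a, f a ^ c a := by
      intro f
      rw [← Finset.prod_fiberwise_of_maps_to (g := fun i => x i) (t := Finset.univ)
        (fun i _ => Finset.mem_univ (x i)) (fun i => f (x i))]
      apply Finset.prod_congr rfl
      intro a _
      rw [Finset.prod_congr rfl (fun i hi => by rw [(Finset.mem_filter.mp hi).2] : ∀ i ∈ S.filter (fun i => x i = a), f (x i) = f a)]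
      rw [Finset.prod_const, hx a]
    have hexp : Real.exp (-(m : ℝ) * klR q P) = ∏ a, (P a / q a) ^ c a := by
      have : -(m : ℝ) * klR q P = ∑ a, (c a : ℝ) * Real.log (P a / q a) := by
        rw [klR, Finset.mul_sum]
        apply Finset.sum_congr rfl
        intro a _
        rcases Nat.eq_zero_or_pos (c a) with h | h
        · simp [h, hczero a h]
        · have hqa : 0 < q a := hcpos a h
          rw [hmq a, Real.log_div (ne_of_gt (hP0 a)) (ne_of_gt hqa),
              Real.log_div (ne_of_gt hqa) (ne_of_gt (hP0 a))]
          ring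
      rw [this, Real.exp_sum]
      apply Finset.prod_congr rfl
      intro a _
      rcases Nat.eq_zero_or_pos (c a) with h | h
      · simp [h]
      · have hqa : 0 < q a := hcpos a h
        rw [mul_comm, Real.exp_mul, Real.exp_log (div_pos (hP0 a) hqa)]
        norm_num
    rw [hsplitP, hsplitW, hgroup P, hgroup q, hexp, ← mul_assoc]
    congr 1
    rw [← Finset.prod_mul_distrib]
    apply Finset.prod_congr rfl
    intro a _
    rcases Nat.eq_zero_or_pos (c a) with h | h
    · simp [h]
    · have hqa : 0 < q a := hcpos a h
      rw [← mul_pow, div_mul_cancel₀ _ (ne_of_gt hqa)]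
  -- put it together
  calc ∑ x ∈ Finset.univ.filter
        (fun x : ι → 𝒳 => ∀ a, (S.filter fun i => x i = a).card = c a), ∏ i, P (x i)
      = ∑ x ∈ Finset.univ.filter
        (fun x : ι → 𝒳 => ∀ a, (S.filter fun i => x i = a).card = c a),
          Real.exp (-(m : ℝ) * klR q P) * ∏ i, w i (x i) := by
        apply Finset.sum_congr rfl
        intro x hx
        exact key x (Finset.mem_filter.mp hx).2
    _ = Real.exp (-(m : ℝ) * klR q P) * ∑ x ∈ Finset.univ.filter
        (fun x : ι → 𝒳 => ∀ a, (S.filter fun i => x i = a).card = c a), ∏ i, w i (x i) := by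
        rw [Finset.mul_sum]
    _ ≤ Real.exp (-(m : ℝ) * klR q P) * ∑ x : ι → 𝒳, ∏ i, w i (x i) := by
        apply mul_le_mul_of_nonneg_left _ (le_of_lt (Real.exp_pos _))
        apply Finset.sum_le_sum_of_subset_of_nonneg (Finset.filter_subset _ _)
        intro x _ _
        apply Finset.prod_nonneg
        intro i _
        by_cases h : i ∈ S
        · simp only [hwdef, h, if_true]; exact hq0 _
        · simp only [hwdef, h, if_false]; exact le_of_lt (hP0 _)
    _ = Real.exp (-(m : ℝ) * klR q P) := by rw [hwsum, mul_one]

def D2R (ρ ε : ℝ) : ℝ :=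
  klR (fun b : Bool => if b then ρ else 1 - ρ) (fun b : Bool => if b then ε else 1 - ε)

lemma weightBound {ε : ℝ} (hε : 0 < ε) (hε1 : ε < 1) {n k : ℕ} (hn : 0 < n) (hk : k ≤ n) :
    ∑ z ∈ Finset.univ.filter (fun z : Fin n → Bool => wt z = k), berW ε z
      ≤ Real.exp (-(n : ℝ) * D2R ((k : ℝ) / n) ε) := by
  classical
  have hcard : (Finset.univ : Finset (Fin n)).card = n := by simp
  have key := sumFiberBound (𝒳 := Bool) (ι := Fin n) Finset.univ
    (fun b => if b then ε else 1 - ε) (by simp) (by intro b; cases b <;> simp [hε] <;> linarith)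
    (fun b => if b then k else n - k) (by simp [hcard]; omega)
  have hset : Finset.univ.filter
      (fun z : Fin n → Bool => ∀ b, (Finset.univ.filter fun i => z i = b).card
        = if b then k else n - k)
      = Finset.univ.filter (fun z : Fin n → Bool => wt z = k) := by
    ext z
    simp only [Finset.mem_filter, Finset.mem_univ, true_and]
    constructor
    · intro h
      have := h true
      simpa [wt] using this
    · intro h b
      have hsplit := Finset.card_filter_add_card_filter_not
        (s := (Finset.univ : Finset (Fin n))) (p := fun i => z i = true)
      have hfalse : (Finset.univ.filter fun i : Fin n => ¬ z i = true)
          = Finset.univ.filter fun i : Fin n => z i = false := by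
        apply Finset.filter_congr
        intro i _
        simp
      cases b
      · rw [hfalse, hcard] at hsplit
        have hzt : (Finset.univ.filter fun i : Fin n => z i = true).card = k := h
        norm_num
        omega
      · simpa [wt] using h
  have hkl : klR (fun b : Bool => ((if b then k else n - k : ℕ) : ℝ) / (n:ℝ))
      (fun b : Bool => if b then ε else 1 - ε) = D2R ((k : ℝ) / n) ε := by
    rw [D2R]
    congr 1
    funext b
    cases b
    · norm_num
      rw [Nat.cast_sub hk]
      field_simp
    · simp
  have hberW : ∀ z : Fin n → Bool, berW ε z = ∏ i, (fun b => if b then ε else 1 - ε) (z i) := by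
    intro z; rfl
  calc ∑ z ∈ Finset.univ.filter (fun z : Fin n → Bool => wt z = k), berW ε z
      = ∑ z ∈ Finset.univ.filter
        (fun z : Fin n → Bool => ∀ b, (Finset.univ.filter fun i => z i = b).card
          = if b then k else n - k), ∏ i, (fun b => if b then ε else 1 - ε) (z i) := by
        rw [hset]
        exact Finset.sum_congr rfl (fun z _ => rfl)
    _ ≤ Real.exp (-((Finset.univ : Finset (Fin n)).card : ℝ)
        * klR (fun b : Bool => ((if b then k else n - k : ℕ) : ℝ) / ((Finset.univ : Finset (Fin n)).card : ℝ))
          (fun b : Bool => if b then ε else 1 - ε)) := by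
        simpa [Finset.filter_congr_decidable] using key
    _ = Real.exp (-(n : ℝ) * D2R ((k : ℝ) / n) ε) := by rw [hcard, hkl]

lemma perNBound {𝒳 : Type*} [Fintype 𝒳] [DecidableEq 𝒳]
    (P0 P1 : 𝒳 → ℝ) (hP0 : P0 ∈ simplex 𝒳) (hP1 : P1 ∈ simplex 𝒳) (hfs0 : ∀ x, 0 < P0 x)
    {ε : ℝ} (hε : 0 < ε) (hε1 : ε < 1) (t L : ℝ)
    (hL : ∀ ρ ∈ Set.Icc (0:ℝ) 1, ∀ q ∈ simplex 𝒳, ∀ v ∈ simplex 𝒳,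
      KL (mix ρ q v) P1 ≤ ENNReal.ofReal t →
        L ≤ D2R ρ ε + (1 - ρ) * klR q P0)
    {n : ℕ} (hn : 0 < n)
    (A : (Fin n → 𝒳) → (Fin n → Bool) → Fin n → 𝒳)
    (hA : ∀ x z i, z i = false → A x z i = x i) :
    ∑ x, ∑ z, iid P0 x * berW ε z *
        (if KL (typeOf (A x z)) P1 ≤ ENNReal.ofReal t then (1 : ℝ) else 0)
      ≤ ((n : ℝ) + 1) ^ (Fintype.card 𝒳 + 1) * Real.exp (-(n : ℝ) * L) := by
  classical
  have hn' : (0:ℝ) < n := by exact_mod_cast hn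
  -- inner bound for fixed z
  have inner : ∀ z : Fin n → Bool,
      ∑ x, iid P0 x * (if KL (typeOf (A x z)) P1 ≤ ENNReal.ofReal t then (1:ℝ) else 0)
        ≤ ((n:ℝ)+1) ^ (Fintype.card 𝒳) *
            Real.exp ((n:ℝ) * D2R ((wt z : ℝ)/n) ε - (n:ℝ) * L) := by
    intro z
    set k := wt z with hkdef
    set S0 := Finset.univ.filter (fun i : Fin n => z i = false) with hS0
    set S1 := Finset.univ.filter (fun i : Fin n => z i = true) with hS1
    set m := S0.card with hmdef
    have hk_card : S1.card = k := rfl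
    have hmk : m + k = n := by
      have hsplit := Finset.card_filter_add_card_filter_not
        (s := (Finset.univ : Finset (Fin n))) (p := fun i => z i = true)
      have hfalse : (Finset.univ.filter fun i : Fin n => ¬ z i = true) = S0 := by
        apply Finset.filter_congr; intro i _; simp
      rw [hfalse, ← hS1] at hsplit
      simp only [Finset.card_univ, Fintype.card_fin] at hsplit
      omega
    have hkn : k ≤ n := by omega
    have hmn : m ≤ n := by omega
    set cnt : (Fin n → 𝒳) → 𝒳 → ℕ := fun x a => (S0.filter fun i => x i = a).card with hcnt
    set dd : (Fin n → 𝒳) → 𝒳 → ℕ := fun y a => (S1.filter fun i => y i = a).card with hdd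
    have hcsum : ∀ x : Fin n → 𝒳, ∑ a, cnt x a = m :=
      fun x => (Finset.card_eq_sum_card_fiberwise (fun i _ => Finset.mem_univ (x i))).symm
    have hdsum : ∀ y : Fin n → 𝒳, ∑ a, dd y a = k :=
      fun y => (Finset.card_eq_sum_card_fiberwise (fun i _ => Finset.mem_univ (y i))).symm
    have hcnt_le : ∀ (x : Fin n → 𝒳) a, cnt x a ≤ m := fun x a => Finset.card_filter_le _ _
    have hdd_le : ∀ (y : Fin n → 𝒳) a, dd y a ≤ k := fun y a => Finset.card_filter_le _ _
    have hfib : ∀ c : 𝒳 → ℕ,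
        Finset.univ.filter (fun x : Fin n → 𝒳 => ∀ a, (S0.filter fun i => x i = a).card = c a)
          = Finset.univ.filter (fun x : Fin n → 𝒳 => ∀ a, cnt x a = c a) := by
      intro c; rfl
    have htype : ∀ x : Fin n → 𝒳, ∀ a,
        (Finset.univ.filter fun i => A x z i = a).card = cnt x a + dd (A x z) a := by
      intro x a
      set y := A x z with hy
      have hunion : (Finset.univ : Finset (Fin n)) = S0 ∪ S1 := by
        ext i
        simp only [Finset.mem_univ, Finset.mem_union, hS0, hS1, Finset.mem_filter, true_and,
          true_iff]
        cases h : z i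
        · left; trivial
        · right; trivial
      have hdisj : Disjoint S0 S1 := by
        rw [Finset.disjoint_left]
        intro i hi hi'
        rw [hS0, Finset.mem_filter] at hi
        rw [hS1, Finset.mem_filter] at hi'
        rw [hi.2] at hi'
        exact absurd hi'.2 (by simp)
      have hsplit2 : Finset.univ.filter (fun i => y i = a)
          = (S0.filter fun i => y i = a) ∪ (S1.filter fun i => y i = a) := by
        rw [hunion, Finset.filter_union]
      rw [hsplit2, Finset.card_union_of_disjoint (Finset.disjoint_filter_filter hdisj)]
      congr 1
      have : S0.filter (fun i => y i = a) = S0.filter (fun i => x i = a) := by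
        apply Finset.filter_congr
        intro i hi
        rw [hS0, Finset.mem_filter] at hi
        rw [hy, hA x z i hi.2]
      rw [this]
    -- from now on everything is opaque
    clear_value cnt dd m k S0 S1
    have hn'' : (n:ℝ) ≠ 0 := ne_of_gt hn'
    have feas : ∀ x : Fin n → 𝒳, KL (typeOf (A x z)) P1 ≤ ENNReal.ofReal t →
        L ≤ D2R ((k:ℝ)/n) ε + ((m:ℝ)/n) * klR (fun a => (cnt x a : ℝ) / m) P0 := by
      intro x hx
      set ρ : ℝ := (k:ℝ)/n with hρ
      set q : 𝒳 → ℝ := if m = 0 then P0 else fun a => (cnt x a : ℝ) / m with hq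
      set v : 𝒳 → ℝ := if k = 0 then P1 else fun a => (dd (A x z) a : ℝ) / k with hv
      have hq_simplex : q ∈ simplex 𝒳 := by
        rw [hq]
        split_ifs with h
        · exact hP0
        · have hm0 : (m:ℝ) ≠ 0 := by exact_mod_cast h
          refine ⟨fun a => by positivity, ?_⟩
          rw [← Finset.sum_div, ← Nat.cast_sum, hcsum x, div_self hm0]
      have hv_simplex : v ∈ simplex 𝒳 := by
        rw [hv]
        split_ifs with h
        · exact hP1
        · have hk0 : (k:ℝ) ≠ 0 := by exact_mod_cast h
          refine ⟨fun a => by positivity, ?_⟩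
          rw [← Finset.sum_div, ← Nat.cast_sum, hdsum _, div_self hk0]
      have hρ01 : ρ ∈ Set.Icc (0:ℝ) 1 := by
        constructor
        · positivity
        · rw [hρ]
          apply div_le_one_of_le₀
          · exact_mod_cast hkn
          · positivity
      have hmix : mix ρ q v = typeOf (A x z) := by
        funext a
        show (1 - ρ) * q a + ρ * v a
          = ((Finset.univ.filter fun i => A x z i = a).card : ℝ) / n
        rw [htype x a]
        push_cast
        rcases Nat.eq_zero_or_pos m with hm0 | hmpos
        · have hk1 : k = n := by omega
          have hcnt0 : cnt x a = 0 := by have := hcnt_le x a; omega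
          have hρ1 : ρ = 1 := by
            rw [hρ, hk1]; exact div_self hn''
          have hknz : k ≠ 0 := by omega
          rw [hq, if_pos hm0, hv, if_neg hknz, hρ1, hcnt0, hk1]
          push_cast
          ring
        · rcases Nat.eq_zero_or_pos k with hk0 | hkpos
          · have hm1 : m = n := by omega
            have hd0 : dd (A x z) a = 0 := by have := hdd_le (A x z) a; omega
            have hρ0 : ρ = 0 := by rw [hρ, hk0]; norm_num
            have hmnz : m ≠ 0 := by omega
            rw [hq, if_neg hmnz, hρ0, hd0, hm1]
            push_cast
            ring
          · have hmnz : (m:ℝ) ≠ 0 := by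
              have : (0:ℝ) < m := by exact_mod_cast hmpos
              linarith
            have hknz : (k:ℝ) ≠ 0 := by
              have : (0:ℝ) < k := by exact_mod_cast hkpos
              linarith
            rw [hq, if_neg (by omega : ¬ m = 0), hv, if_neg (by omega : ¬ k = 0)]
            have hmr : (m:ℝ) + k = n := by exact_mod_cast hmk
            have h1ρ : 1 - ρ = (m:ℝ)/n := by
              rw [hρ, eq_div_iff hn'', sub_mul, div_mul_cancel₀ _ hn'']
              linarith
            have harith : ∀ cc ddd : ℝ,
                (m:ℝ)/n * (cc/m) + (k:ℝ)/n * (ddd/k) = (cc + ddd)/n := by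
              intro cc ddd
              field_simp
            rw [h1ρ, hρ]
            exact harith _ _
      have happ := hL ρ hρ01 q hq_simplex v hv_simplex (by rw [hmix]; exact hx)
      rcases Nat.eq_zero_or_pos m with hm0 | hmpos
      · have h1ρ : (1:ℝ) - ρ = 0 := by
          have hk1 : k = n := by omega
          rw [hρ, hk1, div_self hn'']
          ring
        rw [h1ρ, zero_mul] at happ
        rw [hm0]
        push_cast
        rw [zero_div, zero_mul, add_zero]
        rw [hρ] at happ
        linarith
      · have hmnz : ¬ m = 0 := by omega
        have h1ρ : (1:ℝ) - ρ = (m:ℝ)/n := by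
          have : (m:ℝ) + k = n := by exact_mod_cast hmk
          rw [hρ, eq_div_iff hn'', sub_mul, div_mul_cancel₀ _ hn'']
          linarith
        rw [hq, if_neg hmnz, h1ρ, hρ] at happ
        exact happ
    -- counting over types
    set F := Finset.univ.filter
      (fun x : Fin n → 𝒳 => KL (typeOf (A x z)) P1 ≤ ENNReal.ofReal t) with hFdef
    have step1 : ∑ x, iid P0 x *
        (if KL (typeOf (A x z)) P1 ≤ ENNReal.ofReal t then (1:ℝ) else 0)
        = ∑ x ∈ F, iid P0 x := by
      rw [hFdef, Finset.sum_filter]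
      exact Finset.sum_congr rfl (fun x _ => by
        by_cases h : KL (typeOf (A x z)) P1 ≤ ENNReal.ofReal t <;> simp [h])
    set CC := F.image cnt with hCCdef
    have hiidnn : ∀ x : Fin n → 𝒳, 0 ≤ iid P0 x :=
      fun x => Finset.prod_nonneg (fun i _ => le_of_lt (hfs0 _))
    have hsub : F ⊆ CC.biUnion (fun c => Finset.univ.filter
        (fun x : Fin n → 𝒳 => ∀ a, cnt x a = c a)) := by
      intro x hxF
      exact Finset.mem_biUnion.mpr ⟨cnt x, Finset.mem_image_of_mem _ hxF,
        Finset.mem_filter.mpr ⟨Finset.mem_univ _, fun a => rfl⟩⟩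
    have hdisjfib : (CC : Set (𝒳 → ℕ)).PairwiseDisjoint (fun c => Finset.univ.filter
        (fun x : Fin n → 𝒳 => ∀ a, cnt x a = c a)) := by
      intro c _ c' _ hne
      rw [Function.onFun, Finset.disjoint_left]
      intro x hx hx'
      apply hne
      funext a
      exact ((Finset.mem_filter.mp hx).2 a).symm.trans ((Finset.mem_filter.mp hx').2 a)
    have hperc : ∀ c ∈ CC,
        ∑ x ∈ Finset.univ.filter (fun x : Fin n → 𝒳 => ∀ a, cnt x a = c a), iid P0 x
          ≤ Real.exp ((n:ℝ) * D2R ((k:ℝ)/n) ε - (n:ℝ) * L) := by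
      intro c hc
      obtain ⟨x₀, hx₀F, hx₀⟩ := Finset.mem_image.mp hc
      have hcsum' : ∑ a, c a = S0.card := by
        rw [← hx₀, hcsum x₀, hmdef]
      have hmaster := sumFiberBound S0 P0 hP0.2 hfs0 c hcsum'
      rw [hfib c] at hmaster
      have hfeas := feas x₀ ((Finset.mem_filter.mp hx₀F).2)
      rw [hx₀] at hfeas
      have hprod : (-(S0.card : ℝ)) * klR (fun a => (c a : ℝ) / (S0.card : ℝ)) P0
          ≤ (n:ℝ) * D2R ((k:ℝ)/n) ε - (n:ℝ) * L := by
        rw [← hmdef]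
        have hid : (n:ℝ) * (((m:ℝ)/n) * klR (fun a => (c a : ℝ) / (m:ℝ)) P0)
            = (m:ℝ) * klR (fun a => (c a : ℝ) / (m:ℝ)) P0 := by
          field_simp
        nlinarith [mul_le_mul_of_nonneg_left hfeas (le_of_lt hn')]
      exact hmaster.trans (Real.exp_le_exp.mpr hprod)
    have hCCcard : (CC.card : ℝ) ≤ ((n:ℝ)+1) ^ (Fintype.card 𝒳) := by
      have hbound : ∀ c ∈ CC, ∀ a, c a ≤ n := by
        intro c hc a
        obtain ⟨x₀, _, hx₀⟩ := Finset.mem_image.mp hc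
        rw [← hx₀]
        exact le_trans (hcnt_le x₀ a) hmn
      have h1 : CC.card ≤ Fintype.card (𝒳 → Fin (n+1)) := by
        rw [← Finset.card_univ]
        apply Finset.card_le_card_of_injOn
          (f := fun c a => (⟨min (c a) n, Nat.lt_succ_of_le (Nat.min_le_right _ _)⟩ : Fin (n+1)))
        · intro c _; exact Finset.mem_univ _
        · intro c hc c' hc' heq
          funext a
          have h2 := congrFun heq a
          have h3 : min (c a) n = min (c' a) n := by
            have := congrArg Fin.val h2
            simpa using this
          have hb1 := hbound c hc a
          have hb2 := hbound c' hc' a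
          clear h2 heq
          omega
      have h2 : Fintype.card (𝒳 → Fin (n+1)) = (n+1) ^ (Fintype.card 𝒳) := by
        rw [Fintype.card_fun, Fintype.card_fin]
      rw [h2] at h1
      calc (CC.card : ℝ) ≤ (((n+1) ^ (Fintype.card 𝒳) : ℕ) : ℝ) := by exact_mod_cast h1
        _ = ((n:ℝ)+1) ^ (Fintype.card 𝒳) := by push_cast; ring
    calc ∑ x, iid P0 x * (if KL (typeOf (A x z)) P1 ≤ ENNReal.ofReal t then (1:ℝ) else 0)
        = ∑ x ∈ F, iid P0 x := step1
      _ ≤ ∑ x ∈ CC.biUnion (fun c => Finset.univ.filter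
            (fun x : Fin n → 𝒳 => ∀ a, cnt x a = c a)), iid P0 x :=
          Finset.sum_le_sum_of_subset_of_nonneg hsub (fun x _ _ => hiidnn x)
      _ = ∑ c ∈ CC, ∑ x ∈ Finset.univ.filter
            (fun x : Fin n → 𝒳 => ∀ a, cnt x a = c a), iid P0 x :=
          Finset.sum_biUnion hdisjfib
      _ ≤ ∑ _c ∈ CC, Real.exp ((n:ℝ) * D2R ((k:ℝ)/n) ε - (n:ℝ) * L) :=
          Finset.sum_le_sum hperc
      _ = (CC.card : ℝ) * Real.exp ((n:ℝ) * D2R ((k:ℝ)/n) ε - (n:ℝ) * L) := by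
          rw [Finset.sum_const, nsmul_eq_mul]
      _ ≤ ((n:ℝ)+1) ^ (Fintype.card 𝒳) *
            Real.exp ((n:ℝ) * D2R ((k:ℝ)/n) ε - (n:ℝ) * L) :=
          mul_le_mul_of_nonneg_right hCCcard (le_of_lt (Real.exp_pos _))
  -- assemble over z, grouped by weight
  have hbernn : ∀ z : Fin n → Bool, 0 ≤ berW ε z := by
    intro z
    apply Finset.prod_nonneg
    intro i _
    by_cases h : z i <;> simp [h] <;> linarith
  have hwtle : ∀ z : Fin n → Bool, wt z < n + 1 := by
    intro z
    have : wt z ≤ (Finset.univ : Finset (Fin n)).card := Finset.card_filter_le _ _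
    simp only [Finset.card_univ, Fintype.card_fin] at this
    omega
  set C : ℝ := ((n:ℝ)+1) ^ (Fintype.card 𝒳) with hCdef
  have hCpos : 0 < C := by positivity
  calc ∑ x, ∑ z, iid P0 x * berW ε z *
        (if KL (typeOf (A x z)) P1 ≤ ENNReal.ofReal t then (1 : ℝ) else 0)
      = ∑ z, ∑ x : Fin n → 𝒳, iid P0 x * berW ε z *
          (if KL (typeOf (A x z)) P1 ≤ ENNReal.ofReal t then (1 : ℝ) else 0) :=
        Finset.sum_comm
    _ = ∑ z : Fin n → Bool, berW ε z * ∑ x, iid P0 x *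
          (if KL (typeOf (A x z)) P1 ≤ ENNReal.ofReal t then (1 : ℝ) else 0) := by
        refine Finset.sum_congr rfl fun z _ => ?_
        rw [Finset.mul_sum]
        exact Finset.sum_congr rfl fun x _ => by ring
    _ ≤ ∑ z : Fin n → Bool, berW ε z *
          (C * Real.exp ((n:ℝ) * D2R ((wt z : ℝ)/n) ε - (n:ℝ) * L)) :=
        Finset.sum_le_sum fun z _ => mul_le_mul_of_nonneg_left (inner z) (hbernn z)
    _ = ∑ kk ∈ Finset.range (n+1), ∑ z ∈ Finset.univ.filter
          (fun z : Fin n → Bool => wt z = kk),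
            berW ε z * (C * Real.exp ((n:ℝ) * D2R ((wt z : ℝ)/n) ε - (n:ℝ) * L)) :=
        (Finset.sum_fiberwise_of_maps_to
          (fun z _ => Finset.mem_range.mpr (hwtle z)) _).symm
    _ ≤ ∑ _kk ∈ Finset.range (n+1), C * Real.exp (-(n:ℝ) * L) := by
        refine Finset.sum_le_sum fun kk hkk => ?_
        have hkkn : kk ≤ n := by
          have := Finset.mem_range.mp hkk
          omega
        have hconst : ∀ z ∈ Finset.univ.filter (fun z : Fin n → Bool => wt z = kk),
            berW ε z * (C * Real.exp ((n:ℝ) * D2R ((wt z : ℝ)/n) ε - (n:ℝ) * L))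
            = berW ε z * (C * Real.exp ((n:ℝ) * D2R ((kk : ℝ)/n) ε - (n:ℝ) * L)) := by
          intro z hz
          rw [(Finset.mem_filter.mp hz).2]
        rw [Finset.sum_congr rfl hconst, ← Finset.sum_mul]
        have hwb := weightBound hε hε1 hn hkkn
        have hnn : (0:ℝ) ≤ C * Real.exp ((n:ℝ) * D2R ((kk : ℝ)/n) ε - (n:ℝ) * L) := by
          positivity
        calc (∑ z ∈ Finset.univ.filter (fun z : Fin n → Bool => wt z = kk), berW ε z) *
              (C * Real.exp ((n:ℝ) * D2R ((kk : ℝ)/n) ε - (n:ℝ) * L))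
            ≤ Real.exp (-(n:ℝ) * D2R ((kk:ℝ)/n) ε) *
              (C * Real.exp ((n:ℝ) * D2R ((kk : ℝ)/n) ε - (n:ℝ) * L)) :=
              mul_le_mul_of_nonneg_right hwb hnn
          _ = C * Real.exp (-(n:ℝ) * L) := by
              rw [mul_comm, mul_assoc, ← Real.exp_add]
              congr 2
              ring
    _ = ((n:ℝ)+1) * (C * Real.exp (-(n:ℝ) * L)) := by
        rw [Finset.sum_const, Finset.card_range, nsmul_eq_mul]
        push_cast
        ring
    _ = ((n : ℝ) + 1) ^ (Fintype.card 𝒳 + 1) * Real.exp (-(n : ℝ) * L) := by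
        rw [hCdef, pow_succ]
        ring

lemma exists_string {𝒳 : Type*} [Fintype 𝒳] [DecidableEq 𝒳] {n : ℕ} (c : 𝒳 → ℕ)
    (hc : ∑ a, c a = n) :
    ∃ x : Fin n → 𝒳, ∀ a, (Finset.univ.filter fun i => x i = a).card = c a := by
  classical
  have hcard : Fintype.card ((a : 𝒳) × Fin (c a)) = Fintype.card (Fin n) := by
    simp [Fintype.card_sigma, hc]
  obtain ⟨e⟩ := Fintype.card_eq.mp hcard
  refine ⟨fun i => (e.symm i).1, fun a => ?_⟩
  rw [← Fintype.card_subtype]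
  have e1 : {i : Fin n // (e.symm i).1 = a} ≃ {s : (a' : 𝒳) × Fin (c a') // s.1 = a} :=
    (e.symm).subtypeEquiv (fun i => Iff.rfl)
  have e2 : {s : (a' : 𝒳) × Fin (c a') // s.1 = a} ≃ Fin (c a) :=
    { toFun := fun s => Fin.cast (congrArg c s.2) s.1.2
      invFun := fun j => ⟨⟨a, j⟩, rfl⟩
      left_inv := by rintro ⟨⟨a', j⟩, rfl⟩; rfl
      right_inv := fun j => rfl }
  rw [Fintype.card_congr (e1.trans e2), Fintype.card_fin]

lemma good_string {𝒳 : Type*} [Fintype 𝒳] [DecidableEq 𝒳] [Nonempty 𝒳]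
    (P1 : 𝒳 → ℝ) (hP1 : P1 ∈ simplex 𝒳) (hfs1 : ∀ x, 0 < P1 x) {t : ℝ} (ht : 0 < t) :
    ∀ᶠ n : ℕ in atTop, ∃ x₀ : Fin n → 𝒳, KL (typeOf x₀) P1 ≤ ENNReal.ofReal t := by
  classical
  set K : ℕ := Fintype.card 𝒳 with hK
  set B : ℝ := ∑ a, (P1 a)⁻¹ with hB
  have hBpos : 0 < B := Finset.sum_pos (fun a _ => inv_pos.mpr (hfs1 a)) ⟨Classical.arbitrary 𝒳, Finset.mem_univ _⟩
  have hKpos : 0 < (K:ℝ) := by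
    have : 0 < K := Fintype.card_pos
    exact_mod_cast this
  rw [eventually_atTop]
  refine ⟨max 1 (Nat.ceil ((K:ℝ) * B / t)), fun n hn => ?_⟩
  have hn1 : 1 ≤ n := le_trans (le_max_left _ _) hn
  have hn' : (0:ℝ) < n := by exact_mod_cast hn1
  have hnt : (K:ℝ) * B / n ≤ t := by
    have h1 : ((K:ℝ) * B / t) ≤ n := by
      calc ((K:ℝ) * B / t) ≤ (Nat.ceil ((K:ℝ) * B / t) : ℝ) := Nat.le_ceil _
        _ ≤ n := by exact_mod_cast le_trans (le_max_right _ _) hn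
    rw [div_le_iff₀ hn']
    calc (K:ℝ) * B = ((K:ℝ)*B/t) * t := by field_simp
      _ ≤ (n:ℝ) * t := by apply mul_le_mul_of_nonneg_right h1 (le_of_lt ht)
      _ = t * n := by ring
  -- define the counts
  set a₀ : 𝒳 := Classical.arbitrary 𝒳 with ha₀
  set s : ℕ := ∑ a ∈ Finset.univ.erase a₀, Nat.floor ((n:ℝ) * P1 a) with hs
  have hP1le1 : ∀ a, P1 a ≤ 1 := by
    intro a
    rw [← hP1.2]
    exact Finset.single_le_sum (fun a _ => hP1.1 a) (Finset.mem_univ a)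
  have hsle : s ≤ n := by
    have h1 : (s:ℝ) ≤ ∑ a ∈ Finset.univ.erase a₀, (n:ℝ) * P1 a := by
      rw [hs]
      push_cast
      exact Finset.sum_le_sum (fun a _ => Nat.floor_le (le_of_lt (mul_pos hn' (hfs1 a))))
    have h2 : ∑ a ∈ Finset.univ.erase a₀, (n:ℝ) * P1 a ≤ (n:ℝ) := by
      rw [← Finset.mul_sum]
      calc (n:ℝ) * ∑ a ∈ Finset.univ.erase a₀, P1 a ≤ (n:ℝ) * ∑ a, P1 a := by
            apply mul_le_mul_of_nonneg_left _ (le_of_lt hn')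
            exact Finset.sum_le_sum_of_subset_of_nonneg (Finset.erase_subset _ _)
              (fun a _ _ => hP1.1 a)
        _ = n := by rw [hP1.2, mul_one]
    exact_mod_cast h1.trans h2
  set c : 𝒳 → ℕ := fun a => if a = a₀ then n - s else Nat.floor ((n:ℝ) * P1 a) with hc
  have hcsum : ∑ a, c a = n := by
    rw [← Finset.add_sum_erase _ _ (Finset.mem_univ a₀)]
    have h1 : c a₀ = n - s := by rw [hc]; simp
    have h2 : ∑ a ∈ Finset.univ.erase a₀, c a = s := by
      rw [hs]
      apply Finset.sum_congr rfl
      intro a ha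
      rw [hc]
      simp [Finset.ne_of_mem_erase ha]
    rw [h1, h2]
    omega
  have hcub : ∀ a, (c a : ℝ) ≤ (n:ℝ) * P1 a + K := by
    intro a
    simp only [hc]
    by_cases h : a = a₀
    · rw [if_pos h, h]
      have hflo : ∀ b ∈ Finset.univ.erase a₀, (n:ℝ) * P1 b - 1 ≤ (Nat.floor ((n:ℝ) * P1 b) : ℝ) := by
        intro b _
        have := Nat.lt_floor_add_one ((n:ℝ) * P1 b)
        linarith
      have hsge : (s:ℝ) ≥ ∑ b ∈ Finset.univ.erase a₀, ((n:ℝ) * P1 b - 1) := by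
        rw [hs]
        push_cast
        exact Finset.sum_le_sum hflo
      have hcard_erase : ((Finset.univ.erase a₀).card : ℝ) = (K:ℝ) - 1 := by
        rw [Finset.card_erase_of_mem (Finset.mem_univ a₀), Finset.card_univ, ← hK]
        have : 1 ≤ K := Fintype.card_pos
        push_cast [Nat.cast_sub this]
        ring
      have hsum_split : ∑ b ∈ Finset.univ.erase a₀, ((n:ℝ) * P1 b - 1)
          = (n:ℝ) * (1 - P1 a₀) - ((K:ℝ) - 1) := by
        rw [Finset.sum_sub_distrib, Finset.sum_const, ← Finset.mul_sum]
        have herase_sum : ∑ b ∈ Finset.univ.erase a₀, P1 b = 1 - P1 a₀ := by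
          have := Finset.add_sum_erase Finset.univ P1 (Finset.mem_univ a₀)
          rw [hP1.2] at this
          linarith
        rw [herase_sum, nsmul_eq_mul, hcard_erase]
        ring
      have hns : ((n - s : ℕ) : ℝ) = (n:ℝ) - s := by
        rw [Nat.cast_sub hsle]
      rw [hns]
      rw [hsum_split] at hsge
      have : (1:ℝ) ≤ K := by exact_mod_cast (Fintype.card_pos : 0 < K)
      nlinarith
    · simp only [if_neg h]
      calc ((Nat.floor ((n:ℝ) * P1 a)) : ℝ) ≤ (n:ℝ) * P1 a :=
            Nat.floor_le (le_of_lt (mul_pos hn' (hfs1 a)))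
        _ ≤ (n:ℝ) * P1 a + K := by linarith
  obtain ⟨x₀, hx₀⟩ := exists_string c hcsum
  refine ⟨x₀, ?_⟩
  have htype : typeOf x₀ = fun a => (c a : ℝ) / n := by
    funext a
    rw [typeOf, hx₀ a]
  have hq1 : ∀ a, (c a : ℝ) / n ≤ 1 := by
    intro a
    rw [div_le_one hn']
    have : c a ≤ n := by
      have h1 : (c a : ℝ) ≤ ∑ b, (c b : ℝ) :=
        Finset.single_le_sum (f := fun b => (c b : ℝ))
          (fun b _ => by positivity) (Finset.mem_univ a)
      have h2 : ∑ b, ((c b : ℕ) : ℝ) = (n:ℝ) := by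
        rw [← Nat.cast_sum, hcsum]
      rw [h2] at h1
      exact_mod_cast h1
    exact_mod_cast this
  have hklR : klR (typeOf x₀) P1 ≤ t := by
    rw [htype, klR]
    have hterm : ∀ a : 𝒳,
        (c a : ℝ)/n * Real.log (((c a : ℝ)/n) / P1 a) ≤ ((K:ℝ)/n) / P1 a := by
      intro a
      set qa : ℝ := (c a : ℝ)/n with hqa
      have hqa0 : 0 ≤ qa := by positivity
      have hdiff : qa - P1 a ≤ (K:ℝ)/n := by
        have h1 : (c a : ℝ)/n ≤ ((n:ℝ) * P1 a + K)/n :=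
          (div_le_div_iff_of_pos_right hn').mpr (hcub a)
        have h2 : ((n:ℝ) * P1 a + K)/n = P1 a + (K:ℝ)/n := by
          field_simp
        rw [hqa]
        rw [h2] at h1
        linarith
      rcases eq_or_lt_of_le hqa0 with h0 | hqpos
      · rw [← h0]
        have h9 : (0:ℝ) ≤ ((K:ℝ)/n) / P1 a :=
          div_nonneg (div_nonneg hKpos.le hn'.le) (hfs1 a).le
        simpa using h9
      · have hlog : Real.log (qa / P1 a) ≤ qa / P1 a - 1 :=
          Real.log_le_sub_one_of_pos (div_pos hqpos (hfs1 a))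
        have h1 : qa * Real.log (qa / P1 a) ≤ qa * (qa / P1 a - 1) :=
          mul_le_mul_of_nonneg_left hlog hqa0
        have h2' : qa / P1 a - 1 = (qa - P1 a) / P1 a := by
          rw [sub_div, div_self (ne_of_gt (hfs1 a))]
        have h2 : qa * (qa / P1 a - 1) = qa * (qa - P1 a) / P1 a := by
          rw [h2', mul_div_assoc]
        have h3 : qa * (qa - P1 a) ≤ (K:ℝ)/n := by
          calc qa * (qa - P1 a) ≤ qa * ((K:ℝ)/n) := mul_le_mul_of_nonneg_left hdiff hqa0
            _ ≤ 1 * ((K:ℝ)/n) := by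
                apply mul_le_mul_of_nonneg_right _ (by positivity)
                rw [hqa]; exact hq1 a
            _ = (K:ℝ)/n := one_mul _
        calc qa * Real.log (qa / P1 a) ≤ qa * (qa - P1 a) / P1 a := by rw [← h2]; exact h1
          _ ≤ ((K:ℝ)/n) / P1 a := (div_le_div_iff_of_pos_right (hfs1 a)).mpr h3
    calc ∑ a, (c a : ℝ)/n * Real.log (((c a : ℝ)/n) / P1 a)
        ≤ ∑ a, ((K:ℝ)/n) * (P1 a)⁻¹ := by
          apply Finset.sum_le_sum
          intro a _
          rw [← div_eq_mul_inv]
          exact hterm a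
      _ = ((K:ℝ)/n) * B := by rw [← Finset.mul_sum, hB]
      _ = (K:ℝ) * B / n := by ring
      _ ≤ t := hnt
  rw [KL, if_pos (fun a ha => absurd ha (ne_of_gt (hfs1 a)))]
  exact ENNReal.ofReal_le_ofReal hklR


/-- **Claim 1** (memoryless ingress achievability). -/
theorem claim1_memoryless_achievability {𝒳 : Type*} [Fintype 𝒳] [DecidableEq 𝒳]
    [Nonempty 𝒳]
    (P0 P1 : 𝒳 → ℝ) (hP0 : P0 ∈ simplex 𝒳) (hP1 : P1 ∈ simplex 𝒳)
    (hfs0 : ∀ x, 0 < P0 x) (hfs1 : ∀ x, 0 < P1 x) (hne : P0 ≠ P1)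
    {ε lam δ : ℝ} (hε : 0 < ε) (hε1 : ε < 1) (hlam : 0 < lam) (hδ : 0 < δ) :
    ((⨅ ρ ∈ Set.Icc (0:ℝ) 1, ⨅ q ∈ simplex 𝒳, ⨅ v ∈ simplex 𝒳,
        ⨅ (_ : KL (mix ρ q v) P1 ≤ ENNReal.ofReal (lam + δ)),
          D2 ρ ε + ENNReal.ofReal (1 - ρ) * KL q P0 : ℝ≥0∞) : EReal) ≤
      Filter.liminf (fun n : ℕ =>
        ((-(Real.log (EadvClaim1 P0 P1 ε (lam + δ) n)) / n : ℝ) : EReal))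
        Filter.atTop := by
  classical
  set t : ℝ := lam + δ with htdef
  have ht : 0 < t := by positivity
  set K : ℕ := Fintype.card 𝒳 with hK
  set I : ℝ≥0∞ := (⨅ ρ ∈ Set.Icc (0:ℝ) 1, ⨅ q ∈ simplex 𝒳, ⨅ v ∈ simplex 𝒳,
      ⨅ (_ : KL (mix ρ q v) P1 ≤ ENNReal.ofReal t),
        D2 ρ ε + ENNReal.ofReal (1 - ρ) * KL q P0) with hIdef
  -- basic facts about Bernoulli distributions on Bool
  have hbfull : ∀ b : Bool, 0 < (fun b : Bool => if b then ε else 1 - ε) b := by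
    intro b; cases b <;> simp <;> linarith
  have hbsim : ∀ ρ : ℝ, ρ ∈ Set.Icc (0:ℝ) 1 →
      (fun b : Bool => if b then ρ else 1 - ρ) ∈ simplex Bool := by
    intro ρ hρ
    constructor
    · intro b; cases b <;> simp <;> [linarith [hρ.2]; exact hρ.1]
    · rw [Fintype.sum_bool]; simp
  have hbsimε : (fun b : Bool => if b then ε else 1 - ε) ∈ simplex Bool :=
    hbsim ε ⟨le_of_lt hε, le_of_lt hε1⟩
  have hD2of : ∀ ρ : ℝ, D2 ρ ε = ENNReal.ofReal (D2R ρ ε) := by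
    intro ρ
    exact KL_eq_ofReal _ _ hbfull
  have hD2nn : ∀ ρ : ℝ, ρ ∈ Set.Icc (0:ℝ) 1 → 0 ≤ D2R ρ ε := by
    intro ρ hρ
    exact gibbs (hbsim ρ hρ) hbsimε hbfull
  -- I is bounded by each feasible value
  have hI_le : ∀ ρ, ρ ∈ Set.Icc (0:ℝ) 1 → ∀ q, q ∈ simplex 𝒳 → ∀ v, v ∈ simplex 𝒳 →
      KL (mix ρ q v) P1 ≤ ENNReal.ofReal t →
      I ≤ D2 ρ ε + ENNReal.ofReal (1 - ρ) * KL q P0 := by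
    intro ρ hρ q hq v hv hc
    rw [hIdef]
    exact iInf_le_of_le ρ (iInf_le_of_le hρ (iInf_le_of_le q (iInf_le_of_le hq
      (iInf_le_of_le v (iInf_le_of_le hv (iInf_le_of_le hc le_rfl))))))
  -- I is finite
  have hmix1 : mix 1 P0 P1 = P1 := by
    funext x
    show (1 - 1) * P0 x + 1 * P1 x = P1 x
    ring
  have hklP1 : klR P1 P1 = 0 := by
    rw [klR]
    apply Finset.sum_eq_zero
    intro x _
    rw [div_self (ne_of_gt (hfs1 x)), Real.log_one, mul_zero]
  have hItop : I ≠ ⊤ := by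
    have h := hI_le 1 ⟨zero_le_one, le_refl 1⟩ P0 hP0 P1 hP1
      (by rw [hmix1, KL_eq_ofReal _ _ hfs1, hklP1, ENNReal.ofReal_zero]; exact zero_le)
    apply ne_top_of_le_ne_top _ h
    rw [hD2of]
    simp
  set L : ℝ := I.toReal with hLdef
  have hLnn : 0 ≤ L := ENNReal.toReal_nonneg
  have hcoe : (I : EReal) = (L : EReal) := by
    rw [← ENNReal.ofReal_toReal hItop, EReal.coe_ennreal_ofReal, max_eq_left hLnn]
  -- the key real-valued feasibility bound
  have hLkey : ∀ ρ ∈ Set.Icc (0:ℝ) 1, ∀ q ∈ simplex 𝒳, ∀ v ∈ simplex 𝒳,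
      KL (mix ρ q v) P1 ≤ ENNReal.ofReal t →
        L ≤ D2R ρ ε + (1 - ρ) * klR q P0 := by
    intro ρ hρ q hq v hv hc
    have h1 := hI_le ρ hρ q hq v hv hc
    have hρ1 : (0:ℝ) ≤ 1 - ρ := by linarith [hρ.2]
    have hklnn : 0 ≤ klR q P0 := gibbs hq hP0 hfs0
    have e1 : D2 ρ ε + ENNReal.ofReal (1 - ρ) * KL q P0
        = ENNReal.ofReal (D2R ρ ε + (1 - ρ) * klR q P0) := by
      rw [hD2of, KL_eq_ofReal _ _ hfs0, ← ENNReal.ofReal_mul hρ1,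
        ← ENNReal.ofReal_add (hD2nn ρ hρ) (mul_nonneg hρ1 hklnn)]
    rw [e1] at h1
    have h2 := ENNReal.toReal_mono ENNReal.ofReal_ne_top h1
    rwa [ENNReal.toReal_ofReal (add_nonneg (hD2nn ρ hρ) (mul_nonneg hρ1 hklnn))] at h2
  -- upper bound on EadvClaim1 (for n ≥ 1)
  have hub : ∀ n : ℕ, 0 < n → ∀ e ∈ {e : ℝ | ∃ A : (Fin n → 𝒳) → (Fin n → Bool) → Fin n → 𝒳,
      (∀ x z i, z i = false → A x z i = x i) ∧
      e = ∑ x, ∑ z, iid P0 x * berW ε z *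
            (if KL (typeOf (A x z)) P1 ≤ ENNReal.ofReal t then (1 : ℝ) else 0)},
      e ≤ ((n:ℝ)+1) ^ (K + 1) * Real.exp (-(n:ℝ) * L) := by
    rintro n hn e ⟨A, hA, rfl⟩
    exact perNBound P0 P1 hP0 hP1 hfs0 hε hε1 t L hLkey hn A hA
  have hne : ∀ n : ℕ, ∃ e : ℝ, e ∈ {e : ℝ | ∃ A : (Fin n → 𝒳) → (Fin n → Bool) → Fin n → 𝒳,
      (∀ x z i, z i = false → A x z i = x i) ∧
      e = ∑ x, ∑ z, iid P0 x * berW ε z *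
            (if KL (typeOf (A x z)) P1 ≤ ENNReal.ofReal t then (1 : ℝ) else 0)} := by
    intro n
    exact ⟨_, ⟨fun x _ => x, fun x z i _ => rfl, rfl⟩⟩
  have hEub : ∀ n : ℕ, 0 < n →
      EadvClaim1 P0 P1 ε t n ≤ ((n:ℝ)+1) ^ (K + 1) * Real.exp (-(n:ℝ) * L) := by
    intro n hn
    exact csSup_le (Set.nonempty_def.mpr (hne n)) (hub n hn)
  -- lower bound: positivity via a good string
  obtain ⟨N₀, hN₀⟩ := eventually_atTop.mp (good_string P1 hP1 hfs1 ht)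
  have hEpos : ∀ n : ℕ, 0 < n → N₀ ≤ n → 0 < EadvClaim1 P0 P1 ε t n := by
    intro n hn hNn
    obtain ⟨x₀, hx₀⟩ := hN₀ n hNn
    set z₀ : Fin n → Bool := fun _ => false with hz₀
    have hindnn : ∀ (x : Fin n → 𝒳) (z : Fin n → Bool),
        (0:ℝ) ≤ iid P0 x * berW ε z *
          (if KL (typeOf x) P1 ≤ ENNReal.ofReal t then (1:ℝ) else 0) := by
      intro x z
      apply mul_nonneg (mul_nonneg _ _)
      · split <;> norm_num
      · exact Finset.prod_nonneg (fun i _ => le_of_lt (hfs0 _))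
      · apply Finset.prod_nonneg
        intro i _
        by_cases h : z i <;> simp [h] <;> linarith
    have hterm : 0 < iid P0 x₀ * berW ε z₀ *
        (if KL (typeOf x₀) P1 ≤ ENNReal.ofReal t then (1:ℝ) else 0) := by
      rw [if_pos hx₀, mul_one]
      apply mul_pos
      · exact Finset.prod_pos (fun i _ => hfs0 _)
      · apply Finset.prod_pos
        intro i _
        simp only [hz₀]
        norm_num
        linarith
    have he₀ : 0 < ∑ x : Fin n → 𝒳, ∑ z : Fin n → Bool, iid P0 x * berW ε z *
        (if KL (typeOf x) P1 ≤ ENNReal.ofReal t then (1:ℝ) else 0) := by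
      have h1 : iid P0 x₀ * berW ε z₀ *
          (if KL (typeOf x₀) P1 ≤ ENNReal.ofReal t then (1:ℝ) else 0)
          ≤ ∑ z : Fin n → Bool, iid P0 x₀ * berW ε z *
            (if KL (typeOf x₀) P1 ≤ ENNReal.ofReal t then (1:ℝ) else 0) :=
        Finset.single_le_sum (fun z _ => hindnn x₀ z) (Finset.mem_univ z₀)
      have h2 : ∑ z : Fin n → Bool, iid P0 x₀ * berW ε z *
          (if KL (typeOf x₀) P1 ≤ ENNReal.ofReal t then (1:ℝ) else 0)
          ≤ ∑ x : Fin n → 𝒳, ∑ z : Fin n → Bool, iid P0 x * berW ε z *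
            (if KL (typeOf x) P1 ≤ ENNReal.ofReal t then (1:ℝ) else 0) :=
        Finset.single_le_sum
          (f := fun x => ∑ z, iid P0 x * berW ε z *
            (if KL (typeOf x) P1 ≤ ENNReal.ofReal t then (1:ℝ) else 0))
          (fun x _ => Finset.sum_nonneg (fun z _ => hindnn x z)) (Finset.mem_univ x₀)
      linarith
    have hmem : (∑ x : Fin n → 𝒳, ∑ z : Fin n → Bool, iid P0 x * berW ε z *
        (if KL (typeOf x) P1 ≤ ENNReal.ofReal t then (1:ℝ) else 0))
        ∈ {e : ℝ | ∃ A : (Fin n → 𝒳) → (Fin n → Bool) → Fin n → 𝒳,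
          (∀ x z i, z i = false → A x z i = x i) ∧
          e = ∑ x, ∑ z, iid P0 x * berW ε z *
            (if KL (typeOf (A x z)) P1 ≤ ENNReal.ofReal t then (1 : ℝ) else 0)} :=
      ⟨fun x _ => x, fun x z i _ => rfl, rfl⟩
    have hbdd : BddAbove {e : ℝ | ∃ A : (Fin n → 𝒳) → (Fin n → Bool) → Fin n → 𝒳,
        (∀ x z i, z i = false → A x z i = x i) ∧
        e = ∑ x, ∑ z, iid P0 x * berW ε z *
          (if KL (typeOf (A x z)) P1 ≤ ENNReal.ofReal t then (1 : ℝ) else 0)} :=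
      ⟨((n:ℝ)+1) ^ (K + 1) * Real.exp (-(n:ℝ) * L), fun e he => hub n hn e he⟩
    exact lt_of_lt_of_le he₀ (le_csSup hbdd hmem)
  -- the eventual lower bound on the exponent
  have hev : ∀ᶠ n : ℕ in atTop,
      ((L - ((K:ℝ)+1) * Real.log ((n:ℝ)+1) / n : ℝ) : EReal)
        ≤ ((-(Real.log (EadvClaim1 P0 P1 ε t n)) / n : ℝ) : EReal) := by
    rw [eventually_atTop]
    refine ⟨max 1 N₀, fun n hn => ?_⟩
    have hn1 : 0 < n := le_trans (le_max_left _ _) hn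
    have hnN : N₀ ≤ n := le_trans (le_max_right _ _) hn
    have hn' : (0:ℝ) < n := by exact_mod_cast hn1
    have hpos := hEpos n hn1 hnN
    have hup := hEub n hn1
    have h1 : Real.log (EadvClaim1 P0 P1 ε t n)
        ≤ ((K:ℝ)+1) * Real.log ((n:ℝ)+1) - (n:ℝ) * L := by
      have hl := Real.log_le_log hpos hup
      rw [Real.log_mul (by positivity) (Real.exp_ne_zero _), Real.log_pow,
        Real.log_exp] at hl
      push_cast at hl
      linarith
    apply EReal.coe_le_coe_iff.mpr
    rw [le_div_iff₀ hn']
    have h2 : (L - ((K:ℝ)+1) * Real.log ((n:ℝ)+1) / n) * n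
        = (n:ℝ) * L - ((K:ℝ)+1) * Real.log ((n:ℝ)+1) := by
      field_simp
    rw [h2]
    linarith
  -- the comparison sequence tends to L
  have htend : Filter.Tendsto (fun n : ℕ => L - ((K:ℝ)+1) * Real.log ((n:ℝ)+1) / n)
      atTop (nhds L) := by
    have h0 : Filter.Tendsto (fun n : ℕ => Real.log ((n:ℝ)+1) / ((n:ℝ)+1)) atTop (nhds 0) := by
      have hlo := Real.isLittleO_log_id_atTop.tendsto_div_nhds_zero
      have hcomp : Filter.Tendsto (fun n : ℕ => (n:ℝ)+1) atTop atTop :=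
        Filter.tendsto_atTop_add_const_right _ 1 tendsto_natCast_atTop_atTop
      exact (hlo.comp hcomp)
    have h4 : Filter.Tendsto (fun n : ℕ => ((n:ℝ)+1) / n) atTop (nhds 1) := by
      have h5 : Filter.Tendsto (fun n : ℕ => 1 + 1/(n:ℝ)) atTop (nhds 1) := by
        have := tendsto_const_nhds (x := (1:ℝ)) (f := atTop (α := ℕ))
        have h6 := this.add tendsto_one_div_atTop_nhds_zero_nat
        simpa using h6
      apply h5.congr'
      rw [Filter.eventuallyEq_iff_exists_mem]
      refine ⟨{n : ℕ | 1 ≤ n}, Filter.mem_atTop 1, fun n hn => ?_⟩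
      have hn' : (0:ℝ) < n := by exact_mod_cast hn
      field_simp
    have h5 : Filter.Tendsto (fun n : ℕ => Real.log ((n:ℝ)+1) / n) atTop (nhds 0) := by
      have h6 := h0.mul h4
      rw [zero_mul] at h6
      apply h6.congr'
      rw [Filter.eventuallyEq_iff_exists_mem]
      refine ⟨{n : ℕ | 1 ≤ n}, Filter.mem_atTop 1, fun n hn => ?_⟩
      have hn' : (0:ℝ) < n := by exact_mod_cast hn
      field_simp
    have h7 : Filter.Tendsto (fun n : ℕ => ((K:ℝ)+1) * (Real.log ((n:ℝ)+1) / n))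
        atTop (nhds 0) := by
      have := (tendsto_const_nhds (x := ((K:ℝ)+1)) (f := atTop (α := ℕ))).mul h5
      simpa using this
    have h8 := (tendsto_const_nhds (x := L) (f := atTop (α := ℕ))).sub h7
    rw [sub_zero] at h8
    apply h8.congr
    intro n
    ring
  have htendE : Filter.Tendsto
      (fun n : ℕ => ((L - ((K:ℝ)+1) * Real.log ((n:ℝ)+1) / n : ℝ) : EReal))
      atTop (nhds (L : EReal)) :=
    EReal.tendsto_coe.mpr htend
  have hliminf_lower :
      (L : EReal) = Filter.liminf
        (fun n : ℕ => ((L - ((K:ℝ)+1) * Real.log ((n:ℝ)+1) / n : ℝ) : EReal)) atTop :=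
    (htendE.liminf_eq).symm
  rw [hcoe, hliminf_lower]
  exact Filter.liminf_le_liminf hev

end
end

section
/- (Claim 2.) For any λ ∈ (0, D(P₀‖P₁)) and any ε ∈ (0,1), the minimum over ρ ∈ [0,1] and q,v ∈ Δ satisfying D((1−ρ)q + ρv ‖ P₁) ≤ λ of the quantity D₂(ρ‖ε) + (1−ρ)·D(q‖P₀) is greater than or equal to the minimum over u ∈ Δ and p ∈ B_KL(P₁, λ) of D(p ‖ (1−ε)P₀ + εu). -/
open scoped BigOperators ENNReal Classical
open Filter

noncomputable section

lemma term_ineq (a c s : ℝ) (ha : 0 ≤ a) (hca : c = 0 → a = 0) (hc : 0 ≤ c)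
    (hs0 : 0 ≤ s) (hs : 0 < a → 0 < s) :
    a * Real.log s - (c * s - a) ≤ a * Real.log (a / c) := by
  rcases eq_or_lt_of_le ha with h | h
  · simp only [← h]
    nlinarith [mul_nonneg hc hs0]
  · have hc' : 0 < c := lt_of_le_of_ne hc (fun h0 => by simp [hca h0.symm] at h)
    have hs' := hs h
    have key : Real.log (s * c / a) ≤ s * c / a - 1 :=
      Real.log_le_sub_one_of_pos (by positivity)
    have e1 : Real.log (s * c / a) = Real.log s + Real.log c - Real.log a := by
      rw [Real.log_div (by positivity) h.ne', Real.log_mul hs'.ne' hc'.ne']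
    have e2 : Real.log (a / c) = Real.log a - Real.log c :=
      Real.log_div h.ne' hc'.ne'
    have : a * Real.log (s * c / a) ≤ s * c - a := by
      have := mul_le_mul_of_nonneg_left key h.le
      calc a * Real.log (s*c/a) ≤ a * (s*c/a - 1) := this
        _ = s*c - a := by field_simp
    nlinarith [this]

lemma logsum (a b c d : ℝ) (ha : 0 ≤ a) (hb : 0 ≤ b) (hc : 0 < c) (hd : 0 ≤ d)
    (hdb : d = 0 → b = 0) :
    (a + b) * Real.log ((a + b) / (c + d)) ≤ a * Real.log (a / c) + b * Real.log (b / d) := by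
  have hcd : 0 < c + d := by linarith
  set s := (a + b) / (c + d) with hsdef
  have hs0 : 0 ≤ s := div_nonneg (by linarith) hcd.le
  have h1 := term_ineq a c s ha (fun h0 => absurd h0 hc.ne') hc.le hs0
    (fun _ => div_pos (by linarith) hcd)
  have h2 := term_ineq b d s hb hdb hd hs0 (fun hb' => div_pos (by linarith) hcd)
  have hcds : (c + d) * s = a + b := by
    rw [hsdef]; field_simp
  linarith

/-- **Claim 2**: for `λ ∈ (0, D(P0‖P1))` and `ε ∈ (0,1)`, the minimum over
`ρ ∈ [0,1]`, `q,v ∈ Δ` with `D((1-ρ)q + ρv ‖ P1) ≤ λ` of `D₂(ρ‖ε) + (1-ρ) D(q‖P0)`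
is at least the minimum over `u ∈ Δ`, `p ∈ B_KL(P1,λ)` of `D(p ‖ (1-ε)P0 + εu)`. -/
theorem claim2 {𝒳 : Type*} [Fintype 𝒳] [Nonempty 𝒳]
    (P0 P1 : 𝒳 → ℝ) (hP0 : P0 ∈ simplex 𝒳) (hP1 : P1 ∈ simplex 𝒳)
    (hfs0 : ∀ x, 0 < P0 x) (hfs1 : ∀ x, 0 < P1 x) (hne : P0 ≠ P1)
    {ε lam : ℝ} (hε : 0 < ε) (hε1 : ε < 1)
    (hlam : 0 < lam) (hlam' : ENNReal.ofReal lam < KL P0 P1) :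
    (⨅ u ∈ simplex 𝒳, ⨅ p ∈ BKL P1 lam, KL p (mix ε P0 u)) ≤
      ⨅ ρ ∈ Set.Icc (0:ℝ) 1, ⨅ q ∈ simplex 𝒳, ⨅ v ∈ simplex 𝒳,
        ⨅ (_ : KL (mix ρ q v) P1 ≤ ENNReal.ofReal lam),
          D2 ρ ε + ENNReal.ofReal (1 - ρ) * KL q P0 := by
  refine le_iInf₂ fun ρ hρ => le_iInf₂ fun q hq => le_iInf₂ fun v hv => le_iInf fun hcon => ?_
  obtain ⟨hρ0, hρ1⟩ := hρ
  obtain ⟨hq0, hq1⟩ := hq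
  obtain ⟨hv0, hv1⟩ := hv
  -- membership of the mixture in the simplex and the KL ball
  have hmixs : mix ρ q v ∈ simplex 𝒳 := by
    constructor
    · intro x
      have := hq0 x; have := hv0 x
      simp only [mix]
      nlinarith
    · simp only [mix, Finset.sum_add_distrib, ← Finset.mul_sum, hq1, hv1]
      ring
  have hmem : mix ρ q v ∈ BKL P1 lam := ⟨hmixs, hcon⟩
  refine le_trans (iInf₂_le_of_le v ⟨hv0, hv1⟩ (iInf₂_le (mix ρ q v) hmem)) ?_
  -- all three KL's are finite; unfold them
  have hmpos : ∀ x, 0 < mix ε P0 v x := fun x => by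
    have := hfs0 x; have := hv0 x
    simp only [mix]; nlinarith
  rw [show KL (mix ρ q v) (mix ε P0 v) =
      ENNReal.ofReal (∑ x, mix ρ q v x * Real.log (mix ρ q v x / mix ε P0 v x)) from
    if_pos (fun x h => absurd h (hmpos x).ne')]
  rw [show KL q P0 =
      ENNReal.ofReal (∑ x, q x * Real.log (q x / P0 x)) from
    if_pos (fun x h => absurd h (hfs0 x).ne')]
  have hD2 : D2 ρ ε = ENNReal.ofReal
      (ρ * Real.log (ρ / ε) + (1 - ρ) * Real.log ((1 - ρ) / (1 - ε))) := by
    rw [D2, KL, if_pos]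
    · congr 1
      rw [Fintype.sum_bool]
      simp
    · intro b hb
      cases b <;> simp at hb <;> linarith
  rw [hD2, ← ENNReal.ofReal_mul (by linarith : (0:ℝ) ≤ 1 - ρ)]
  refine le_trans (ENNReal.ofReal_le_ofReal ?_) ENNReal.ofReal_add_le
  -- the real inequality
  set C := ∑ x, q x * Real.log (q x / P0 x) with hC
  calc ∑ x, mix ρ q v x * Real.log (mix ρ q v x / mix ε P0 v x)
      ≤ ∑ x, ((1-ρ) * q x * Real.log ((1-ρ) * q x / ((1-ε) * P0 x))
            + ρ * v x * Real.log (ρ * v x / (ε * v x))) := by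
        refine Finset.sum_le_sum fun x _ => ?_
        have h := logsum ((1-ρ) * q x) (ρ * v x) ((1-ε) * P0 x) (ε * v x)
          (mul_nonneg (by linarith) (hq0 x)) (mul_nonneg hρ0 (hv0 x))
          (mul_pos (by linarith) (hfs0 x)) (mul_nonneg hε.le (hv0 x))
          (fun h0 => by
            have : v x = 0 := by
              rcases mul_eq_zero.mp h0 with h' | h'
              · exact absurd h' hε.ne'
              · exact h'
            simp [this])
        simpa [mix] using h
    _ = ∑ x, (((1-ρ) * Real.log ((1-ρ)/(1-ε))) * q x + (1-ρ) * (q x * Real.log (q x / P0 x))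
            + (ρ * Real.log (ρ/ε)) * v x) := by
        refine Finset.sum_congr rfl fun x _ => ?_
        have e2 : ρ * v x * Real.log (ρ * v x / (ε * v x)) = (ρ * Real.log (ρ/ε)) * v x := by
          rcases eq_or_lt_of_le (hv0 x) with h | h
          · simp [← h]
          · rw [mul_div_mul_right _ _ h.ne']
            ring
        have e1 : (1-ρ) * q x * Real.log ((1-ρ) * q x / ((1-ε) * P0 x))
            = ((1-ρ) * Real.log ((1-ρ)/(1-ε))) * q x + (1-ρ) * (q x * Real.log (q x / P0 x)) := by
          rcases eq_or_lt_of_le (mul_nonneg (by linarith : (0:ℝ) ≤ 1-ρ) (hq0 x)) with h | h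
          · rcases mul_eq_zero.mp h.symm with h' | h' <;> simp [h']
          · have hρ' : 0 < 1 - ρ := by
              rcases (mul_pos_iff.mp h) with ⟨h1, _⟩ | ⟨h1, h2⟩
              · exact h1
              · exact absurd h2 (not_lt.mpr (hq0 x))
            have hqx : 0 < q x := by
              rcases (mul_pos_iff.mp h) with ⟨_, h2⟩ | ⟨h1, _⟩
              · exact h2
              · exact absurd h1 (not_lt.mpr hρ'.le)
            have : (1-ρ) * q x / ((1-ε) * P0 x) = ((1-ρ)/(1-ε)) * (q x / P0 x) := by
              rw [mul_div_mul_comm]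
            rw [this, Real.log_mul (ne_of_gt (div_pos hρ' (by linarith))) (ne_of_gt (div_pos hqx (hfs0 x))),
              Real.log_div hρ'.ne' (by linarith : (1:ℝ)-ε ≠ 0),
              Real.log_div hqx.ne' (hfs0 x).ne']
            ring
        rw [e1, e2]
    _ = ρ * Real.log (ρ / ε) + (1 - ρ) * Real.log ((1 - ρ) / (1 - ε)) + (1 - ρ) * C := by
        simp only [Finset.sum_add_distrib, ← Finset.mul_sum, hq1, hv1, hC]
        ring


end
end

section
/- (Reverse direction of Claim 2, proved in Appendix A.) For any λ ≥ 0 and any ε ∈ (0,1), the minimum over u ∈ Δ and p ∈ B_KL(P₁, λ) of D(p ‖ (1−ε)P₀ + εu) is less than or equal to the minimum over ρ ∈ [0,1] and q,v ∈ Δ satisfying D((1−ρ)q + ρv ‖ P₁) ≤ λ of the quantity D₂(ρ‖ε) + (1−ρ)·D(q‖P₀). -/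
open scoped BigOperators ENNReal Classical
open Filter

noncomputable section

/-- Log-sum inequality for two terms. -/
lemma logSum_two (a b c d : ℝ) (ha : 0 ≤ a) (hb : 0 ≤ b) (hc : 0 < c) (hd : 0 ≤ d)
    (hbd : d = 0 → b = 0) :
    (a + b) * Real.log ((a + b) / (c + d)) ≤ a * Real.log (a / c) + b * Real.log (b / d) := by
  rcases eq_or_lt_of_le hd with hd0 | hd0
  · have hb0 : b = 0 := hbd hd0.symm
    subst hb0; rw [← hd0]; simp
  · have ht : 0 < c + d := by linarith
    have hw1 : (0:ℝ) ≤ c / (c + d) := by positivity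
    have hw2 : (0:ℝ) ≤ d / (c + d) := by positivity
    have hw : c / (c + d) + d / (c + d) = 1 := by field_simp
    have key := Real.convexOn_mul_log.2 (Set.mem_Ici.2 (div_nonneg ha hc.le))
      (Set.mem_Ici.2 (div_nonneg hb hd0.le)) hw1 hw2 hw
    simp only [smul_eq_mul] at key
    have e1 : c / (c + d) * (a / c) + d / (c + d) * (b / d) = (a + b) / (c + d) := by
      field_simp
    have e2 : c / (c + d) * (a / c * Real.log (a / c)) = a * Real.log (a / c) / (c + d) := by
      field_simp
    have e3 : d / (c + d) * (b / d * Real.log (b / d)) = b * Real.log (b / d) / (c + d) := by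
      field_simp
    rw [e1, e2, e3] at key
    have key2 : (a + b) * Real.log ((a + b) / (c + d)) / (c + d) ≤
        (a * Real.log (a / c) + b * Real.log (b / d)) / (c + d) := by
      calc (a + b) * Real.log ((a + b) / (c + d)) / (c + d)
          = (a + b) / (c + d) * Real.log ((a + b) / (c + d)) := by ring
        _ ≤ a * Real.log (a / c) / (c + d) + b * Real.log (b / d) / (c + d) := key
        _ = (a * Real.log (a / c) + b * Real.log (b / d)) / (c + d) := by ring
    exact (div_le_div_iff_of_pos_right ht).mp key2

/-- **Reverse direction of Claim 2** (Appendix A): for any `λ ≥ 0` and `ε ∈ (0,1)`,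
the minimum over `u ∈ Δ`, `p ∈ B_KL(P1,λ)` of `D(p ‖ (1-ε)P0 + εu)` is at most the
minimum over `ρ ∈ [0,1]`, `q,v ∈ Δ` with `D((1-ρ)q + ρv ‖ P1) ≤ λ` of
`D₂(ρ‖ε) + (1-ρ) D(q‖P0)`. -/
theorem claim2_reverse {𝒳 : Type*} [Fintype 𝒳] [Nonempty 𝒳]
    (P0 P1 : 𝒳 → ℝ) (hP0 : P0 ∈ simplex 𝒳) (hP1 : P1 ∈ simplex 𝒳)
    (hfs0 : ∀ x, 0 < P0 x) (hfs1 : ∀ x, 0 < P1 x) (hne : P0 ≠ P1)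
    {ε lam : ℝ} (hε : 0 < ε) (hε1 : ε < 1) (hlam : 0 ≤ lam) :
    (⨅ u ∈ simplex 𝒳, ⨅ p ∈ BKL P1 lam, KL p (mix ε P0 u)) ≤
      ⨅ ρ ∈ Set.Icc (0:ℝ) 1, ⨅ q ∈ simplex 𝒳, ⨅ v ∈ simplex 𝒳,
        ⨅ (_ : KL (mix ρ q v) P1 ≤ ENNReal.ofReal lam),
          D2 ρ ε + ENNReal.ofReal (1 - ρ) * KL q P0 := by
  refine le_iInf fun ρ => le_iInf fun hρ => le_iInf fun q => le_iInf fun hq =>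
    le_iInf fun v => le_iInf fun hv => le_iInf fun hfeas => ?_
  obtain ⟨hρ0, hρ1⟩ := hρ
  obtain ⟨hq0, hq1⟩ := hq
  obtain ⟨hv0, hv1⟩ := hv
  have hρ1' : (0:ℝ) ≤ 1 - ρ := by linarith
  have hε1' : (0:ℝ) < 1 - ε := by linarith
  -- p := mix ρ q v is in the KL ball, with u := v
  have hpmem : mix ρ q v ∈ simplex 𝒳 := by
    constructor
    · intro x
      exact add_nonneg (mul_nonneg hρ1' (hq0 x)) (mul_nonneg hρ0 (hv0 x))
    · simp only [mix, Finset.sum_add_distrib, ← Finset.mul_sum, hq1, hv1]; ring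
  have hBL : mix ρ q v ∈ BKL P1 lam := ⟨hpmem, hfeas⟩
  have step1 : (⨅ u ∈ simplex 𝒳, ⨅ p ∈ BKL P1 lam, KL p (mix ε P0 u)) ≤
      KL (mix ρ q v) (mix ε P0 v) :=
    le_trans (iInf₂_le v ⟨hv0, hv1⟩) (iInf₂_le (mix ρ q v) hBL)
  refine step1.trans ?_
  -- rewrite the three KL quantities as `ofReal` of real sums
  have hMpos : ∀ x, 0 < mix ε P0 v x := fun x =>
    add_pos_of_pos_of_nonneg (mul_pos hε1' (hfs0 x)) (mul_nonneg hε.le (hv0 x))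
  have hKLmix : KL (mix ρ q v) (mix ε P0 v) =
      ENNReal.ofReal (∑ x, mix ρ q v x * Real.log (mix ρ q v x / mix ε P0 v x)) := by
    rw [KL, if_pos]
    intro x h; exact absurd h (ne_of_gt (hMpos x))
  have hKLq : KL q P0 = ENNReal.ofReal (∑ x, q x * Real.log (q x / P0 x)) := by
    rw [KL, if_pos]
    intro x h; exact absurd h (ne_of_gt (hfs0 x))
  have hD2 : D2 ρ ε =
      ENNReal.ofReal (ρ * Real.log (ρ / ε) + (1 - ρ) * Real.log ((1 - ρ) / (1 - ε))) := by
    rw [D2, KL, if_pos]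
    · rw [Fintype.sum_bool]; simp
    · intro b hb
      cases b <;> simp only [if_true, if_false, Bool.false_eq_true] at hb <;> linarith
  rw [hKLmix, hKLq, hD2, ← ENNReal.ofReal_mul hρ1']
  refine le_trans (ENNReal.ofReal_le_ofReal ?_) ENNReal.ofReal_add_le
  -- the real inequality
  simp only [mix]
  have hsum : ∑ x, ((1 - ρ) * q x + ρ * v x) *
        Real.log (((1 - ρ) * q x + ρ * v x) / ((1 - ε) * P0 x + ε * v x)) ≤
      ∑ x, ((1 - ρ) * q x * Real.log ((1 - ρ) * q x / ((1 - ε) * P0 x)) +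
        ρ * v x * Real.log (ρ * v x / (ε * v x))) := by
    refine Finset.sum_le_sum fun x _ => logSum_two _ _ _ _
      (mul_nonneg hρ1' (hq0 x)) (mul_nonneg hρ0 (hv0 x))
      (mul_pos hε1' (hfs0 x)) (mul_nonneg hε.le (hv0 x)) (fun h => ?_)
    have hvx : v x = 0 := by
      rcases mul_eq_zero.mp h with h' | h'
      · exact absurd h' (ne_of_gt hε)
      · exact h'
    simp [hvx]
  refine hsum.trans ?_
  have hA : ∀ x ∈ Finset.univ, (1 - ρ) * q x * Real.log ((1 - ρ) * q x / ((1 - ε) * P0 x)) +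
      ρ * v x * Real.log (ρ * v x / (ε * v x)) =
      (1 - ρ) * (q x * Real.log (q x / P0 x)) +
        ((1 - ρ) * Real.log ((1 - ρ) / (1 - ε))) * q x +
        (ρ * Real.log (ρ / ε)) * v x := by
    intro x _
    have hA2 : ρ * v x * Real.log (ρ * v x / (ε * v x)) = (ρ * Real.log (ρ / ε)) * v x := by
      by_cases hvx : v x = 0
      · simp [hvx]
      · rw [mul_comm ρ (v x), mul_comm ε (v x), mul_div_mul_left _ _ hvx]; ring
    rw [hA2]
    rcases eq_or_lt_of_le hρ1 with h1 | h1
    · rw [← h1]; simp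
    · by_cases hqx : q x = 0
      · simp [hqx]
      · have hqx' : 0 < q x := lt_of_le_of_ne (hq0 x) (Ne.symm hqx)
        have hρpos : (0:ℝ) < 1 - ρ := by linarith
        have e : (1 - ρ) * q x / ((1 - ε) * P0 x) = (1 - ρ) / (1 - ε) * (q x / P0 x) :=
          (div_mul_div_comm _ _ _ _).symm
        rw [e, Real.log_mul (ne_of_gt (div_pos hρpos hε1'))
          (ne_of_gt (div_pos hqx' (hfs0 x)))]
        ring
  rw [Finset.sum_congr rfl hA, Finset.sum_add_distrib, Finset.sum_add_distrib,
    ← Finset.mul_sum, ← Finset.mul_sum, ← Finset.mul_sum, hq1, hv1, mul_one, mul_one]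
  exact le_of_eq (by ring)

end
end

section
/- (Appendix B continuity claim.) Fix ε ∈ (0,1) and λ > 0. Define, for t ≥ 0, F(t) = min over ρ ∈ [0,1] and q,v ∈ Δ satisfying D((1−ρ)q + ρv ‖ P₁) ≤ t of D₂(ρ‖ε) + (1−ρ)·D(q‖P₀). Then lim_{δ→0⁺} F(λ+δ) = F(λ). -/
open scoped BigOperators ENNReal Classical
open Filter

noncomputable section

/-- `F(t) = min_{ρ ∈ [0,1], q,v ∈ Δ : D((1-ρ)q+ρv‖P1) ≤ t} D₂(ρ‖ε) + (1-ρ)D(q‖P0)`. -/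
def Fber {𝒳 : Type*} [Fintype 𝒳] (P0 P1 : 𝒳 → ℝ) (ε t : ℝ) : ℝ≥0∞ :=
  ⨅ ρ ∈ Set.Icc (0:ℝ) 1, ⨅ q ∈ simplex 𝒳, ⨅ v ∈ simplex 𝒳,
    ⨅ (_ : KL (mix ρ q v) P1 ≤ ENNReal.ofReal t),
      D2 ρ ε + ENNReal.ofReal (1 - ρ) * KL q P0

namespace AppendixBAux

/-- Real-valued binary KL. -/
def gBer (ε ρ : ℝ) : ℝ :=
  ρ * Real.log (ρ / ε) + (1 - ρ) * Real.log ((1 - ρ) / (1 - ε))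

lemma gBer_continuous {ε : ℝ} (hε : 0 < ε) (hε1 : ε < 1) : Continuous (gBer ε) := by
  have h1 : (0:ℝ) < 1 - ε := by linarith
  have heq : gBer ε = fun ρ => ε * ((ρ / ε) * Real.log (ρ / ε))
      + (1 - ε) * (((1 - ρ) / (1 - ε)) * Real.log ((1 - ρ) / (1 - ε))) := by
    funext ρ
    unfold gBer
    rw [← mul_assoc, ← mul_assoc, mul_div_cancel₀ _ hε.ne', mul_div_cancel₀ _ h1.ne']
  rw [heq]
  have hc : Continuous fun x : ℝ => x * Real.log x := Real.continuous_mul_log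
  exact ((continuous_const.mul (hc.comp (continuous_id.div_const ε))).add
    (continuous_const.mul (hc.comp ((continuous_const.sub continuous_id).div_const (1 - ε)))))

lemma D2_eq {ε : ℝ} (hε : 0 < ε) (hε1 : ε < 1) (ρ : ℝ) :
    D2 ρ ε = ENNReal.ofReal (gBer ε ρ) := by
  unfold D2 KL
  rw [if_pos]
  · congr 1
    rw [Fintype.sum_bool]
    simp only [if_true, Bool.false_eq_true, if_false]
    rfl
  · intro b hb
    exfalso
    cases b <;> simp at hb <;> linarith

lemma KL_eq_ofReal {𝒳 : Type*} [Fintype 𝒳] (p P : 𝒳 → ℝ) (hP : ∀ x, 0 < P x) :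
    KL p P = ENNReal.ofReal (∑ x, p x * Real.log (p x / P x)) := by
  unfold KL
  rw [if_pos]
  intro x hx
  exact absurd hx (hP x).ne'

lemma pointwise_conv {c a θ : ℝ} (hc : 0 < c) (ha : 0 ≤ a) (hθ0 : 0 ≤ θ) (hθ1 : θ ≤ 1) :
    ((1 - θ) * a + θ * c) * Real.log (((1 - θ) * a + θ * c) / c)
      ≤ (1 - θ) * (a * Real.log (a / c)) := by
  have key : ∀ x : ℝ, 0 ≤ x → x * Real.log (x / c) = x * Real.log x - x * Real.log c := by
    intro x hx
    rcases eq_or_lt_of_le hx with h | h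
    · simp [← h]
    · rw [Real.log_div h.ne' hc.ne']; ring
  have hm : 0 ≤ (1 - θ) * a + θ * c :=
    add_nonneg (mul_nonneg (by linarith) ha) (mul_nonneg hθ0 hc.le)
  have hconv := Real.convexOn_mul_log.2 (Set.mem_Ici.2 ha) (Set.mem_Ici.2 hc.le)
    (by linarith : (0:ℝ) ≤ 1 - θ) hθ0 (by ring : (1 - θ) + θ = 1)
  simp only [smul_eq_mul] at hconv
  rw [key _ hm, key _ ha]
  nlinarith [hconv]

lemma Fber_anti {𝒳 : Type*} [Fintype 𝒳] (P0 P1 : 𝒳 → ℝ) (ε : ℝ) {s t : ℝ} (h : s ≤ t) :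
    Fber P0 P1 ε t ≤ Fber P0 P1 ε s := by
  unfold Fber
  refine iInf_mono fun ρ => iInf_mono fun hρ => iInf_mono fun q => iInf_mono fun hq =>
    iInf_mono fun v => iInf_mono fun hv => ?_
  exact le_iInf fun hs => iInf_le _ (hs.trans (ENNReal.ofReal_le_ofReal h))

end AppendixBAux
namespace AppendixBAux

lemma gBer_mod {ε : ℝ} (hε : 0 < ε) (hε1 : ε < 1) {e : ℝ} (he : 0 < e) :
    ∃ θ0 : ℝ, 0 < θ0 ∧ θ0 < 1 ∧ ∀ θ : ℝ, 0 < θ → θ ≤ θ0 →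
      ∀ ρ ∈ Set.Icc (0:ℝ) 1, gBer ε (ρ + θ * (1 - ρ)) ≤ gBer ε ρ + e := by
  have hu : UniformContinuousOn (gBer ε) (Set.Icc 0 1) :=
    isCompact_Icc.uniformContinuousOn_of_continuous (gBer_continuous hε hε1).continuousOn
  rw [Metric.uniformContinuousOn_iff] at hu
  obtain ⟨d, hd, H⟩ := hu e he
  refine ⟨min (d / 2) (1 / 2), by positivity, lt_of_le_of_lt (min_le_right _ _) (by norm_num), ?_⟩
  intro θ hθ hθd ρ hρ
  obtain ⟨hρ0, hρ1⟩ := hρ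
  have hθ1 : θ ≤ 1 / 2 := hθd.trans (min_le_right _ _)
  have hρ' : ρ + θ * (1 - ρ) ∈ Set.Icc (0:ℝ) 1 := by
    constructor
    · nlinarith
    · nlinarith
  have hdist : dist (ρ + θ * (1 - ρ)) ρ < d := by
    rw [Real.dist_eq]
    have : |ρ + θ * (1 - ρ) - ρ| = θ * (1 - ρ) := by
      rw [abs_of_nonneg]; ring_nf; nlinarith
    rw [this]
    nlinarith [hθd.trans (min_le_left _ _)]
  have := H _ hρ' _ ⟨hρ0, hρ1⟩ hdist
  rw [Real.dist_eq] at this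
  have := (abs_lt.mp this).2
  linarith

lemma step {𝒳 : Type*} [Fintype 𝒳] (P0 P1 : 𝒳 → ℝ) (hP1 : P1 ∈ simplex 𝒳)
    (hfs1 : ∀ x, 0 < P1 x) {ε : ℝ} (hε : 0 < ε) (hε1 : ε < 1)
    {θ t e : ℝ} (hθ0 : 0 < θ) (hθ1 : θ < 1) (ht : 0 < t) (he : 0 ≤ e)
    (hmod : ∀ ρ ∈ Set.Icc (0:ℝ) 1, gBer ε (ρ + θ * (1 - ρ)) ≤ gBer ε ρ + e) :
    Fber P0 P1 ε ((1 - θ) * t) ≤ Fber P0 P1 ε t + ENNReal.ofReal e := by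
  unfold Fber
  simp only [ENNReal.iInf_add]
  refine le_iInf fun ρ => le_iInf fun hρ => le_iInf fun q => le_iInf fun hq =>
    le_iInf fun v => le_iInf fun hv => le_iInf fun hKL => ?_
  set ρ' : ℝ := ρ + θ * (1 - ρ) with hρ'def
  obtain ⟨hρ0, hρ1⟩ := hρ
  have hρ'pos : 0 < ρ' := by dsimp [ρ']; nlinarith
  have hρ'1 : ρ' ≤ 1 := by dsimp [ρ']; nlinarith
  set v' : 𝒳 → ℝ := fun x => ((1 - θ) * (ρ * v x) + θ * P1 x) / ρ' with hv'def
  have hv'mem : v' ∈ simplex 𝒳 := by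
    constructor
    · intro x
      apply div_nonneg _ hρ'pos.le
      exact add_nonneg (mul_nonneg (by linarith) (mul_nonneg hρ0 (hv.1 x)))
        (mul_nonneg hθ0.le (hfs1 x).le)
    · have : ∑ x, v' x = (∑ x, ((1 - θ) * (ρ * v x) + θ * P1 x)) / ρ' := by
        rw [← Finset.sum_div]
      rw [this, Finset.sum_add_distrib, ← Finset.mul_sum, ← Finset.mul_sum, ← Finset.mul_sum,
        hv.2, hP1.2]
      field_simp [ρ']
      ring
  have hmixeq : mix ρ' q v' = fun x => (1 - θ) * (mix ρ q v x) + θ * P1 x := by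
    funext x
    dsimp [mix, v']
    rw [mul_div_cancel₀ _ hρ'pos.ne']
    dsimp [ρ']
    ring
  have hwnn : ∀ x, 0 ≤ mix ρ q v x := by
    intro x
    dsimp [mix]
    exact add_nonneg (mul_nonneg (by linarith) (hq.1 x)) (mul_nonneg hρ0 (hv.1 x))
  have hKL' : KL (mix ρ' q v') P1 ≤ ENNReal.ofReal ((1 - θ) * t) := by
    rw [KL_eq_ofReal _ _ hfs1] at hKL ⊢
    have hS : ∑ x, mix ρ q v x * Real.log (mix ρ q v x / P1 x) ≤ t := by
      by_cases hS0 : 0 ≤ ∑ x, mix ρ q v x * Real.log (mix ρ q v x / P1 x)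
      · exact (ENNReal.ofReal_le_ofReal_iff ht.le).mp hKL
      · linarith [not_le.mp hS0]
    rw [hmixeq]
    apply ENNReal.ofReal_le_ofReal
    calc ∑ x, ((1 - θ) * mix ρ q v x + θ * P1 x) *
          Real.log (((1 - θ) * mix ρ q v x + θ * P1 x) / P1 x)
        ≤ ∑ x, (1 - θ) * (mix ρ q v x * Real.log (mix ρ q v x / P1 x)) :=
          Finset.sum_le_sum fun x _ => pointwise_conv (hfs1 x) (hwnn x) hθ0.le hθ1.le
      _ = (1 - θ) * ∑ x, mix ρ q v x * Real.log (mix ρ q v x / P1 x) := by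
          rw [Finset.mul_sum]
      _ ≤ (1 - θ) * t := by nlinarith
  have hobj : D2 ρ' ε + ENNReal.ofReal (1 - ρ') * KL q P0
      ≤ D2 ρ ε + ENNReal.ofReal (1 - ρ) * KL q P0 + ENNReal.ofReal e := by
    have h1 : D2 ρ' ε ≤ D2 ρ ε + ENNReal.ofReal e := by
      rw [D2_eq hε hε1, D2_eq hε hε1]
      calc ENNReal.ofReal (gBer ε ρ') ≤ ENNReal.ofReal (gBer ε ρ + e) :=
            ENNReal.ofReal_le_ofReal (hmod ρ ⟨hρ0, hρ1⟩)
        _ ≤ ENNReal.ofReal (gBer ε ρ) + ENNReal.ofReal e := ENNReal.ofReal_add_le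
    have h2 : ENNReal.ofReal (1 - ρ') * KL q P0 ≤ ENNReal.ofReal (1 - ρ) * KL q P0 := by
      apply mul_le_mul_left
      apply ENNReal.ofReal_le_ofReal
      dsimp [ρ']
      nlinarith
    calc D2 ρ' ε + ENNReal.ofReal (1 - ρ') * KL q P0
        ≤ (D2 ρ ε + ENNReal.ofReal e) + ENNReal.ofReal (1 - ρ) * KL q P0 := add_le_add h1 h2
      _ = D2 ρ ε + ENNReal.ofReal (1 - ρ) * KL q P0 + ENNReal.ofReal e := by
          rw [add_right_comm]
  refine le_trans ?_ hobj
  exact iInf_le_of_le ρ' <| iInf_le_of_le ⟨hρ'pos.le, hρ'1⟩ <| iInf_le_of_le q <|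
    iInf_le_of_le hq <| iInf_le_of_le v' <| iInf_le_of_le hv'mem <| iInf_le_of_le hKL' le_rfl

end AppendixBAux
/-- **Appendix B continuity claim**: `F(λ+δ) → F(λ)` as `δ → 0⁺`. -/
theorem appendixB_continuity {𝒳 : Type*} [Fintype 𝒳] [Nonempty 𝒳]
    (P0 P1 : 𝒳 → ℝ) (hP0 : P0 ∈ simplex 𝒳) (hP1 : P1 ∈ simplex 𝒳)
    (hfs0 : ∀ x, 0 < P0 x) (hfs1 : ∀ x, 0 < P1 x) (hne : P0 ≠ P1)
    {ε lam : ℝ} (hε : 0 < ε) (hε1 : ε < 1) (hlam : 0 < lam) :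
    Filter.Tendsto (fun δ : ℝ => Fber P0 P1 ε (lam + δ))
      (nhdsWithin 0 (Set.Ioi 0)) (nhds (Fber P0 P1 ε lam)) := by
  set L := Fber P0 P1 ε lam with hL
  have hupper : ∀ δ : ℝ, 0 < δ → Fber P0 P1 ε (lam + δ) ≤ L :=
    fun δ hδ => AppendixBAux.Fber_anti P0 P1 ε (by linarith)
  have hlower : ∀ e : ℝ, 0 < e → ∃ δ0 : ℝ, 0 < δ0 ∧ ∀ δ : ℝ, 0 < δ → δ ≤ δ0 →
      L ≤ Fber P0 P1 ε (lam + δ) + ENNReal.ofReal e := by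
    intro e he
    obtain ⟨θ0, hθ0pos, hθ01, hmod⟩ := AppendixBAux.gBer_mod hε hε1 he
    refine ⟨lam * θ0, by positivity, ?_⟩
    intro δ hδ hδ0
    set θ : ℝ := δ / (lam + δ) with hθdef
    have hlamδ : 0 < lam + δ := by linarith
    have hθpos : 0 < θ := div_pos hδ hlamδ
    have hθlt1 : θ < 1 := by rw [div_lt_one hlamδ]; linarith
    have hθle : θ ≤ θ0 := by
      rw [div_le_iff₀ hlamδ]
      nlinarith
    have harg : (1 - θ) * (lam + δ) = lam := by
      rw [hθdef]
      field_simp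
      ring
    have hstep := AppendixBAux.step P0 P1 hP1 hfs1 hε hε1 hθpos hθlt1 hlamδ he.le
      (fun ρ hρ => hmod θ hθpos hθle ρ hρ)
    rw [harg] at hstep
    exact hstep
  rw [tendsto_order]
  constructor
  · intro b hb
    obtain ⟨c, hbc, hcL⟩ := exists_between hb
    obtain ⟨c', hcc', hc'L⟩ := exists_between hcL
    have hc'top : c' ≠ ⊤ := hc'L.ne_top
    have hsub_pos : 0 < c' - c := tsub_pos_of_lt hcc'
    have hsub_top : c' - c ≠ ⊤ := (tsub_le_self.trans_lt (lt_top_iff_ne_top.mpr hc'top)).ne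
    have hepos : 0 < (c' - c).toReal := ENNReal.toReal_pos hsub_pos.ne' hsub_top
    have hofReal : ENNReal.ofReal (c' - c).toReal = c' - c := ENNReal.ofReal_toReal hsub_top
    obtain ⟨δ0, hδ0, Hlow⟩ := hlower _ hepos
    have hmem : Set.Ioo (-1 : ℝ) δ0 ∈ nhds (0 : ℝ) := Ioo_mem_nhds (by linarith) hδ0
    filter_upwards [self_mem_nhdsWithin, mem_nhdsWithin_of_mem_nhds hmem] with δ h1 h2
    have hlow := Hlow δ h1 h2.2.le
    rw [hofReal] at hlow
    have hF : c ≤ Fber P0 P1 ε (lam + δ) := by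
      have h3 : c + (c' - c) ≤ L := by
        rw [add_tsub_cancel_of_le hcc'.le]; exact hc'L.le
      have h4 := h3.trans hlow
      exact (ENNReal.add_le_add_iff_right hsub_top).mp h4
    exact lt_of_lt_of_le hbc hF
  · intro b hb
    filter_upwards [self_mem_nhdsWithin] with δ hδ
    exact lt_of_le_of_lt (hupper δ hδ) hb

end
end

section
/- (Appendix C continuity claim, achievability side.) Fix ε ∈ (0,1) and λ > 0. Define, for t ≥ 0, G(t) = min over q,v ∈ Δ satisfying D((1−ε)q + εv ‖ P₁) ≤ t of D(q‖P₀). Then lim_{δ→0⁺} G(λ+δ) = G(λ). -/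
open scoped BigOperators ENNReal Classical
open Filter

noncomputable section

/-- `G(t) = min_{q,v ∈ Δ : D((1-ε)q+εv‖P1) ≤ t} D(q‖P0)`. -/
def Gfw {𝒳 : Type*} [Fintype 𝒳] (P0 P1 : 𝒳 → ℝ) (ε t : ℝ) : ℝ≥0∞ :=
  ⨅ q ∈ simplex 𝒳, ⨅ v ∈ simplex 𝒳,
    ⨅ (_ : KL (mix ε q v) P1 ≤ ENNReal.ofReal t), KL q P0

lemma KL_pos_support {𝒳 : Type*} [Fintype 𝒳] (p s : 𝒳 → ℝ) (hs : ∀ x, 0 < s x) :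
    KL p s = ENNReal.ofReal (∑ x, p x * Real.log (p x / s x)) := by
  unfold KL
  rw [if_pos]
  intro x hx
  exact absurd hx (hs x).ne'

lemma mul_log_div_eq (u c : ℝ) (hu : 0 ≤ u) (hc : 0 < c) :
    u * Real.log (u / c) = u * Real.log u - u * Real.log c := by
  rcases eq_or_lt_of_le hu with h | h
  · simp [← h]
  · rw [Real.log_div h.ne' hc.ne']; ring

lemma kl_real_convex {𝒳 : Type*} [Fintype 𝒳] (θ : ℝ) (hθ0 : 0 ≤ θ) (hθ1 : θ ≤ 1)
    (p r s : 𝒳 → ℝ) (hp : ∀ x, 0 ≤ p x) (hr : ∀ x, 0 ≤ r x) (hs : ∀ x, 0 < s x) :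
    ∑ x, ((1 - θ) * p x + θ * r x) * Real.log (((1 - θ) * p x + θ * r x) / s x) ≤
      (1 - θ) * ∑ x, p x * Real.log (p x / s x) + θ * ∑ x, r x * Real.log (r x / s x) := by
  rw [Finset.mul_sum, Finset.mul_sum, ← Finset.sum_add_distrib]
  refine Finset.sum_le_sum fun x _ => ?_
  have h1θ : (0:ℝ) ≤ 1 - θ := by linarith
  have hw : 0 ≤ (1 - θ) * p x + θ * r x :=
    add_nonneg (mul_nonneg h1θ (hp x)) (mul_nonneg hθ0 (hr x))
  rw [mul_log_div_eq _ _ hw (hs x), mul_log_div_eq _ _ (hp x) (hs x),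
    mul_log_div_eq _ _ (hr x) (hs x)]
  have hconv := Real.convexOn_mul_log.2 (Set.mem_Ici.mpr (hp x)) (Set.mem_Ici.mpr (hr x))
    h1θ hθ0 (by ring)
  simp only [smul_eq_mul] at hconv
  nlinarith [hconv]

lemma sum_self_log_zero {𝒳 : Type*} [Fintype 𝒳] (s : 𝒳 → ℝ) :
    ∑ x, s x * Real.log (s x / s x) = 0 := by
  apply Finset.sum_eq_zero
  intro x _
  rcases eq_or_ne (s x) 0 with h | h
  · simp [h]
  · rw [div_self h, Real.log_one, mul_zero]

lemma Gfw_anti {𝒳 : Type*} [Fintype 𝒳] (P0 P1 : 𝒳 → ℝ) (ε t t' : ℝ) (h : t ≤ t') :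
    Gfw P0 P1 ε t' ≤ Gfw P0 P1 ε t := by
  refine le_iInf₂ fun q hq => le_iInf₂ fun v hv => le_iInf fun hc => ?_
  refine iInf₂_le_of_le q hq (iInf₂_le_of_le v hv (iInf_le_of_le ?_ le_rfl))
  exact hc.trans (ENNReal.ofReal_le_ofReal h)

lemma mix_mem {𝒳 : Type*} [Fintype 𝒳] {a : ℝ} (ha0 : 0 ≤ a) (ha1 : a ≤ 1)
    {p q : 𝒳 → ℝ} (hp : p ∈ simplex 𝒳) (hq : q ∈ simplex 𝒳) :
    mix a p q ∈ simplex 𝒳 := by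
  constructor
  · intro x
    have := hp.1 x; have := hq.1 x
    have : (0:ℝ) ≤ 1 - a := by linarith
    unfold mix
    positivity
  · unfold mix
    rw [Finset.sum_add_distrib, ← Finset.mul_sum, ← Finset.mul_sum, hp.2, hq.2]
    ring

lemma Gfw_key {𝒳 : Type*} [Fintype 𝒳] (P0 P1 : 𝒳 → ℝ)
    (hP1 : P1 ∈ simplex 𝒳) (hfs0 : ∀ x, 0 < P0 x) (hfs1 : ∀ x, 0 < P1 x)
    {ε lam δ : ℝ} (hε : 0 < ε) (hε1 : ε < 1) (hlam : 0 < lam) (hδ : 0 < δ) :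
    Gfw P0 P1 ε lam -
      ENNReal.ofReal (δ / (lam + δ) * ∑ x, P1 x * Real.log (P1 x / P0 x)) ≤
      Gfw P0 P1 ε (lam + δ) := by
  set C : ℝ := ∑ x, P1 x * Real.log (P1 x / P0 x) with hC
  set θ : ℝ := δ / (lam + δ) with hθdef
  have hlamδ : 0 < lam + δ := by linarith
  have hθ0 : 0 < θ := div_pos hδ hlamδ
  have hθ1 : θ < 1 := by rw [hθdef, div_lt_one hlamδ]; linarith
  have h1θ : (0:ℝ) ≤ 1 - θ := by linarith
  refine le_iInf₂ fun q hq => le_iInf₂ fun v hv => le_iInf fun hc => ?_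
  rw [tsub_le_iff_right]
  -- the perturbed pair
  set q' : 𝒳 → ℝ := mix θ q P1 with hq'def
  set v' : 𝒳 → ℝ := mix θ v P1 with hv'def
  have hq' : q' ∈ simplex 𝒳 := mix_mem hθ0.le hθ1.le hq hP1
  have hv' : v' ∈ simplex 𝒳 := mix_mem hθ0.le hθ1.le hv hP1
  have hm : mix ε q v ∈ simplex 𝒳 := mix_mem hε.le hε1.le hq hv
  have hmix : mix ε q' v' = mix θ (mix ε q v) P1 := by
    funext x; simp only [mix, hq'def, hv'def]; ring
  -- feasibility of (q', v') at level lam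
  have hSm : ∑ x, mix ε q v x * Real.log (mix ε q v x / P1 x) ≤ lam + δ := by
    rw [KL_pos_support _ _ hfs1] at hc
    exact (ENNReal.ofReal_le_ofReal_iff hlamδ.le).mp hc
  have hfeas : KL (mix ε q' v') P1 ≤ ENNReal.ofReal lam := by
    rw [KL_pos_support _ _ hfs1, hmix]
    apply ENNReal.ofReal_le_ofReal
    calc ∑ x, mix θ (mix ε q v) P1 x * Real.log (mix θ (mix ε q v) P1 x / P1 x)
        ≤ (1 - θ) * (∑ x, mix ε q v x * Real.log (mix ε q v x / P1 x)) +
          θ * ∑ x, P1 x * Real.log (P1 x / P1 x) :=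
          kl_real_convex θ hθ0.le hθ1.le _ _ _ hm.1 hP1.1 hfs1
      _ = (1 - θ) * (∑ x, mix ε q v x * Real.log (mix ε q v x / P1 x)) := by
          rw [sum_self_log_zero]; ring
      _ ≤ (1 - θ) * (lam + δ) := mul_le_mul_of_nonneg_left hSm h1θ
      _ = lam := by rw [hθdef]; field_simp; ring
  -- bound KL q' P0
  have hKq' : KL q' P0 ≤ KL q P0 + ENNReal.ofReal (θ * C) := by
    rw [KL_pos_support _ _ hfs0, KL_pos_support _ _ hfs0]
    calc ENNReal.ofReal (∑ x, q' x * Real.log (q' x / P0 x))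
        ≤ ENNReal.ofReal ((1 - θ) * (∑ x, q x * Real.log (q x / P0 x)) + θ * C) := by
          apply ENNReal.ofReal_le_ofReal
          exact kl_real_convex θ hθ0.le hθ1.le _ _ _ hq.1 hP1.1 hfs0
      _ ≤ ENNReal.ofReal ((1 - θ) * ∑ x, q x * Real.log (q x / P0 x)) +
            ENNReal.ofReal (θ * C) := ENNReal.ofReal_add_le
      _ ≤ ENNReal.ofReal (∑ x, q x * Real.log (q x / P0 x)) + ENNReal.ofReal (θ * C) := by
          refine add_le_add ?_ le_rfl
          rw [ENNReal.ofReal_mul h1θ]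
          calc ENNReal.ofReal (1 - θ) * ENNReal.ofReal (∑ x, q x * Real.log (q x / P0 x))
              ≤ 1 * ENNReal.ofReal (∑ x, q x * Real.log (q x / P0 x)) := by
                gcongr
                exact ENNReal.ofReal_le_one.mpr (by linarith)
            _ = _ := one_mul _
  calc Gfw P0 P1 ε lam ≤ KL q' P0 :=
        iInf₂_le_of_le q' hq' (iInf₂_le_of_le v' hv' (iInf_le_of_le hfeas le_rfl))
    _ ≤ KL q P0 + ENNReal.ofReal (θ * C) := hKq'
    _ = KL q P0 + ENNReal.ofReal (θ * C) := rfl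

/-- **Appendix C continuity claim (achievability side)**: `G(λ+δ) → G(λ)` as `δ → 0⁺`. -/
theorem appendixC_continuity_achievability {𝒳 : Type*} [Fintype 𝒳] [Nonempty 𝒳]
    (P0 P1 : 𝒳 → ℝ) (hP0 : P0 ∈ simplex 𝒳) (hP1 : P1 ∈ simplex 𝒳)
    (hfs0 : ∀ x, 0 < P0 x) (hfs1 : ∀ x, 0 < P1 x) (hne : P0 ≠ P1)
    {ε lam : ℝ} (hε : 0 < ε) (hε1 : ε < 1) (hlam : 0 < lam) :
    Filter.Tendsto (fun δ : ℝ => Gfw P0 P1 ε (lam + δ))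
      (nhdsWithin 0 (Set.Ioi 0)) (nhds (Gfw P0 P1 ε lam)) := by
  set C : ℝ := ∑ x, P1 x * Real.log (P1 x / P0 x) with hC
  -- Gfw lam is finite
  have hfin : Gfw P0 P1 ε lam ≠ ⊤ := by
    have h1 : mix ε P1 P1 = P1 := by funext x; simp [mix]; ring
    have hfeas : KL (mix ε P1 P1) P1 ≤ ENNReal.ofReal lam := by
      rw [h1, KL_pos_support _ _ hfs1, sum_self_log_zero]
      simp
    have : Gfw P0 P1 ε lam ≤ KL P1 P0 :=
      iInf₂_le_of_le P1 hP1 (iInf₂_le_of_le P1 hP1 (iInf_le_of_le hfeas le_rfl))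
    refine ne_top_of_le_ne_top ?_ this
    rw [KL_pos_support _ _ hfs0]
    exact ENNReal.ofReal_ne_top
  -- η tendsto 0
  have hη : Tendsto (fun δ : ℝ => ENNReal.ofReal (δ / (lam + δ) * C))
      (nhdsWithin 0 (Set.Ioi 0)) (nhds 0) := by
    have hreal : Tendsto (fun δ : ℝ => δ / (lam + δ) * C) (nhdsWithin 0 (Set.Ioi 0))
        (nhds 0) := by
      have hcont : ContinuousAt (fun δ : ℝ => δ / (lam + δ) * C) 0 := by
        apply ContinuousAt.mul _ continuousAt_const
        exact ContinuousAt.div continuousAt_id (by fun_prop) (by simpa using hlam.ne')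
      have := hcont.tendsto
      simp only [zero_div, zero_mul, add_zero] at this
      simpa using this.mono_left nhdsWithin_le_nhds
    have : Tendsto ENNReal.ofReal (nhds (0:ℝ)) (nhds (ENNReal.ofReal 0)) :=
      (ENNReal.continuous_ofReal).continuousAt
    simpa [Function.comp_def] using this.comp hreal
  -- squeeze
  have hlow : Tendsto (fun δ : ℝ => Gfw P0 P1 ε lam - ENNReal.ofReal (δ / (lam + δ) * C))
      (nhdsWithin 0 (Set.Ioi 0)) (nhds (Gfw P0 P1 ε lam)) := by
    have := ENNReal.Tendsto.sub (tendsto_const_nhds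
      (x := Gfw P0 P1 ε lam) (f := nhdsWithin (0:ℝ) (Set.Ioi 0))) hη (Or.inl hfin)
    simpa using this
  refine tendsto_of_tendsto_of_tendsto_of_le_of_le' hlow tendsto_const_nhds ?_ ?_
  · filter_upwards [self_mem_nhdsWithin] with δ hδ
    exact Gfw_key P0 P1 hP1 hfs0 hfs1 hε hε1 hlam hδ
  · filter_upwards [self_mem_nhdsWithin] with δ hδ
    exact Gfw_anti P0 P1 ε lam (lam + δ) (by linarith [Set.mem_Ioi.mp hδ])

end
end

section
/- (Claim 5, strong contamination achievability.) Fix ε ∈ (0,1), λ > 0 and δ > 0. For each n define E^adv_{1|0}(n) as the supremum, over all adversaries A : 𝒳^n → 𝒳^n such that A(x^n) differs from x^n in at most nε coordinates for every x^n, of the probability P_{X^n∼P₀^n}(D(P_{A(X^n)} ‖ P₁) ≤ λ + δ). Then liminf_{n→∞} −(1/n) log E^adv_{1|0}(n) ≥ min over p,q ∈ Δ with d_TV(q,p) ≤ ε and D(p‖P₁) ≤ λ + δ of D(q‖P₀). -/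
open scoped BigOperators ENNReal Classical
open Filter

noncomputable section

/-- Worst-case error in Claim 5: supremum, over (deterministic) strong-contamination
adversaries changing at most `nε` coordinates, of the probability that the type of the
corrupted samples lands in `B_KL(P1, t)`, when `X^n` is i.i.d. `P0`. -/
def EadvClaim5 {𝒳 : Type*} [Fintype 𝒳] [DecidableEq 𝒳] (P0 P1 : 𝒳 → ℝ) (ε t : ℝ)
    (n : ℕ) : ℝ :=
  sSup {e : ℝ | ∃ A : (Fin n → 𝒳) → Fin n → 𝒳,
    (∀ x, ((Finset.univ.filter fun i => A x i ≠ x i).card : ℝ) ≤ (n : ℝ) * ε) ∧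
    e = ∑ x, iid P0 x *
          (if KL (typeOf (A x)) P1 ≤ ENNReal.ofReal t then (1 : ℝ) else 0)}

section MainAux
open Finset Real
open scoped Topology
set_option linter.unusedSectionVars false
variable {𝒳 : Type*} [Fintype 𝒳] [DecidableEq 𝒳]

def cnt {n : ℕ} (x : Fin n → 𝒳) (a : 𝒳) : ℕ :=
  (Finset.univ.filter fun i => x i = a).card

lemma typeOf_eq_cnt {n : ℕ} (x : Fin n → 𝒳) (a : 𝒳) :
    typeOf x a = (cnt x a : ℝ) / n := rfl

lemma sum_cnt {n : ℕ} (x : Fin n → 𝒳) : ∑ a, cnt x a = n := by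
  have := Finset.card_eq_sum_card_fiberwise (f := x) (s := univ) (t := univ)
    (fun i _ => mem_univ (x i))
  simpa [cnt] using this.symm

lemma cnt_le {n : ℕ} (x : Fin n → 𝒳) (a : 𝒳) : cnt x a ≤ n := by
  simpa [cnt] using (Finset.card_filter_le univ (fun i => x i = a))

lemma typeOf_nonneg {n : ℕ} (x : Fin n → 𝒳) (a : 𝒳) : 0 ≤ typeOf x a := by
  rw [typeOf_eq_cnt]; positivity

lemma typeOf_mem_simplex {n : ℕ} (hn : n ≠ 0) (x : Fin n → 𝒳) :
    typeOf x ∈ simplex 𝒳 := by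
  refine ⟨typeOf_nonneg x, ?_⟩
  have : ∑ a, typeOf x a = (∑ a, (cnt x a : ℝ)) / n := by
    simp [typeOf_eq_cnt, Finset.sum_div]
  rw [this, ← Nat.cast_sum, sum_cnt]
  exact div_self (by exact_mod_cast hn)

lemma iid_eq_prod_pow {n : ℕ} (P : 𝒳 → ℝ) (x : Fin n → 𝒳) :
    iid P x = ∏ a, P a ^ cnt x a := by
  unfold iid cnt
  rw [Finset.prod_comp (s := (univ : Finset (Fin n))) (M := ℝ) P x]
  refine Finset.prod_subset (Finset.subset_univ _) ?_
  intro a _ ha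
  have hz : (Finset.univ.filter fun i => x i = a).card = 0 := by
    rw [Finset.card_eq_zero, Finset.filter_eq_empty_iff]
    intro i _
    exact fun h => ha (Finset.mem_image.2 ⟨i, mem_univ i, h⟩)
  rw [hz, pow_zero]

lemma iid_nonneg {n : ℕ} {P : 𝒳 → ℝ} (hP : ∀ a, 0 ≤ P a) (x : Fin n → 𝒳) :
    0 ≤ iid P x :=
  Finset.prod_nonneg fun i _ => hP (x i)

lemma sum_iid_eq_one {n : ℕ} {P : 𝒳 → ℝ} (hP : P ∈ simplex 𝒳) :
    ∑ x : Fin n → 𝒳, iid P x = 1 := by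
  have := Finset.prod_univ_sum (fun _ : Fin n => (univ : Finset 𝒳)) (fun _ a => P a)
  rw [Fintype.piFinset_univ] at this
  calc ∑ x : Fin n → 𝒳, iid P x = ∏ _i : Fin n, ∑ a, P a := this.symm
    _ = 1 := by simp [hP.2]

lemma gibbs_s13 {q P : 𝒳 → ℝ} (hq : q ∈ simplex 𝒳) (hP : P ∈ simplex 𝒳)
    (hPpos : ∀ a, 0 < P a) : 0 ≤ ∑ a, q a * Real.log (q a / P a) := by
  have key : ∀ a, q a - P a ≤ q a * Real.log (q a / P a) := by
    intro a
    rcases eq_or_lt_of_le (hq.1 a) with h | h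
    · simp [← h, (hPpos a).le]
    · have hlog : Real.log (P a / q a) ≤ P a / q a - 1 :=
        Real.log_le_sub_one_of_pos (div_pos (hPpos a) h)
      have hlog2 : Real.log (q a / P a) = - Real.log (P a / q a) := by
        rw [← Real.log_inv]; congr 1; field_simp
      have hqP : q a * (P a / q a) = P a := by field_simp
      have h2 := mul_le_mul_of_nonneg_left hlog (hq.1 a)
      rw [hlog2]; nlinarith
  calc (0:ℝ) = ∑ a, (q a - P a) := by rw [Finset.sum_sub_distrib, hq.2, hP.2]; ring
    _ ≤ _ := Finset.sum_le_sum fun a _ => key a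

def sigmaFiberEquiv {β : 𝒳 → Type*} (a : 𝒳) : {s : Σ b, β b // s.1 = a} ≃ β a where
  toFun s := s.2 ▸ s.1.2
  invFun j := ⟨⟨a, j⟩, rfl⟩
  left_inv := by rintro ⟨⟨b, j⟩, rfl⟩; rfl
  right_inv j := rfl

lemma exists_string_s13 {n : ℕ} (c : 𝒳 → ℕ) (h : ∑ a, c a = n) :
    ∃ x : Fin n → 𝒳, ∀ a, cnt x a = c a := by
  have hcard : Fintype.card (Σ a, Fin (c a)) = Fintype.card (Fin n) := by
    simp [Fintype.card_sigma, h]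
  let φ : Fin n ≃ Σ a, Fin (c a) := Fintype.equivOfCardEq (by simpa using hcard.symm)
  refine ⟨fun i => (φ i).1, fun a => ?_⟩
  have h1 : cnt (fun i => (φ i).1) a = Fintype.card {i : Fin n // (φ i).1 = a} :=
    (Fintype.card_subtype _).symm
  rw [h1]
  have e1 : {i : Fin n // (φ i).1 = a} ≃ {s : Σ b, Fin (c b) // s.1 = a} :=
    φ.subtypeEquiv fun i => Iff.rfl
  rw [Fintype.card_congr (e1.trans (sigmaFiberEquiv a))]
  simp

lemma cnt_split {n : ℕ} (x y : Fin n → 𝒳) (a : 𝒳) :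
    cnt x a = (Finset.univ.filter fun i => x i = a ∧ x i = y i).card
      + (Finset.univ.filter fun i => x i = a ∧ ¬ (x i = y i)).card := by
  unfold cnt
  rw [← Finset.filter_filter, ← Finset.filter_filter,
    Finset.card_filter_add_card_filter_not]

lemma sum_fiber_diff {n : ℕ} (x y : Fin n → 𝒳) :
    ∑ a, (Finset.univ.filter fun i => x i = a ∧ ¬ (x i = y i)).card
      = (Finset.univ.filter fun i => ¬ (x i = y i)).card := by
  have := Finset.card_eq_sum_card_fiberwise
    (f := x) (s := Finset.univ.filter fun i => ¬ (x i = y i)) (t := univ)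
    (fun i _ => mem_univ (x i))
  rw [this]
  refine Finset.sum_congr rfl fun a _ => ?_
  rw [Finset.filter_filter]
  congr 1
  apply Finset.filter_congr
  intro i _
  tauto

lemma dTV_typeOf_le {n : ℕ} (x y : Fin n → 𝒳) :
    dTV (typeOf x) (typeOf y)
      ≤ ((Finset.univ.filter fun i => ¬ (x i = y i)).card : ℝ) / n := by
  set D := (Finset.univ.filter fun i => ¬ (x i = y i)).card with hD
  have key : ∀ a, |typeOf x a - typeOf y a| ≤
      (((Finset.univ.filter fun i => x i = a ∧ ¬ (x i = y i)).card : ℝ)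
       + ((Finset.univ.filter fun i => y i = a ∧ ¬ (x i = y i)).card : ℝ)) / n := by
    intro a
    have hx := cnt_split x y a
    have hy := cnt_split y x a
    have hcomm : (Finset.univ.filter fun i => y i = a ∧ y i = x i)
        = (Finset.univ.filter fun i => x i = a ∧ x i = y i) := by
      apply Finset.filter_congr; intro i _; constructor <;> rintro ⟨h1, h2⟩ <;>
        simp_all
    have hcomm2 : (Finset.univ.filter fun i => y i = a ∧ ¬ (y i = x i))
        = (Finset.univ.filter fun i => y i = a ∧ ¬ (x i = y i)) := by
      apply Finset.filter_congr; intro i _; constructor <;> rintro ⟨h1, h2⟩ <;>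
        simp_all [eq_comm]
    rw [hcomm, hcomm2] at hy
    set e := (Finset.univ.filter fun i => x i = a ∧ x i = y i).card
    set dx := (Finset.univ.filter fun i => x i = a ∧ ¬ (x i = y i)).card
    set dy := (Finset.univ.filter fun i => y i = a ∧ ¬ (x i = y i)).card
    rw [typeOf_eq_cnt, typeOf_eq_cnt, hx, hy, div_sub_div_same]
    rcases Nat.eq_zero_or_pos n with rfl | hn
    · simp
    · rw [abs_div, abs_of_nonneg (by positivity : (0:ℝ) ≤ (n:ℝ))]
      gcongr
      push_cast
      rw [add_sub_add_left_eq_sub]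
      exact (abs_sub _ _).trans (by simp [Nat.abs_cast])
  calc dTV (typeOf x) (typeOf y) = (∑ a, |typeOf x a - typeOf y a|) / 2 := rfl
    _ ≤ (∑ a, (((Finset.univ.filter fun i => x i = a ∧ ¬ (x i = y i)).card : ℝ)
       + ((Finset.univ.filter fun i => y i = a ∧ ¬ (x i = y i)).card : ℝ)) / n) / 2 := by
        have hs := Finset.sum_le_sum (s := (univ : Finset 𝒳)) fun a _ => key a
        linarith [hs]
    _ = ((D : ℝ) + D) / n / 2 := by
        rw [← Finset.sum_div]
        congr 2
        rw [Finset.sum_add_distrib, ← Nat.cast_sum, ← Nat.cast_sum,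
          sum_fiber_diff x y]
        have := sum_fiber_diff y x
        have hc : (Finset.univ.filter fun i => ¬ (y i = x i))
            = (Finset.univ.filter fun i => ¬ (x i = y i)) := by
          apply Finset.filter_congr; intro i _; simp [eq_comm]
        rw [hc] at this
        have hc2 : ∀ a, (Finset.univ.filter fun i => y i = a ∧ ¬ (x i = y i))
            = (Finset.univ.filter fun i => y i = a ∧ ¬ (y i = x i)) := by
          intro a; apply Finset.filter_congr; intro i _; simp [eq_comm]
        simp_rw [hc2]
        rw [this]
    _ = (D : ℝ) / n := by ring

lemma cnt_eq_of_typeOf_eq {n : ℕ} (hn : n ≠ 0) {x y : Fin n → 𝒳}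
    (h : typeOf x = typeOf y) : ∀ a, cnt x a = cnt y a := by
  intro a
  have := congrFun h a
  have hn' : (0:ℝ) < (n:ℝ) := by exact_mod_cast Nat.pos_of_ne_zero hn
  rw [typeOf_eq_cnt, typeOf_eq_cnt, div_eq_div_iff hn'.ne' hn'.ne'] at this
  exact_mod_cast mul_right_cancel₀ (by exact_mod_cast hn : ((n:ℝ) ≠ 0)) this

lemma typeSum_le {n : ℕ} (hn : n ≠ 0) (P0 : 𝒳 → ℝ) (hfs0 : ∀ a, 0 < P0 a)
    (x0 : Fin n → 𝒳) :
    ∑ x ∈ Finset.univ.filter (fun x : Fin n → 𝒳 => typeOf x = typeOf x0), iid P0 x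
      ≤ Real.exp (-((n : ℝ) * ∑ a, typeOf x0 a * Real.log (typeOf x0 a / P0 a))) := by
  set q := typeOf x0 with hq
  have hqs : q ∈ simplex 𝒳 := typeOf_mem_simplex hn x0
  set S : ℝ := ∑ a, q a * Real.log (q a / P0 a) with hS
  have hnS : (n : ℝ) * S = ∑ a, (cnt x0 a : ℝ) * Real.log (q a / P0 a) := by
    rw [hS, Finset.mul_sum]
    refine Finset.sum_congr rfl fun a _ => ?_
    rw [← mul_assoc]
    congr 1
    rw [hq, typeOf_eq_cnt, mul_div_cancel₀]
    exact_mod_cast hn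
  have hkey : ∀ x : Fin n → 𝒳, typeOf x = typeOf x0 →
      iid P0 x = iid q x * Real.exp (-((n : ℝ) * S)) := by
    intro x hx
    have hc := cnt_eq_of_typeOf_eq hn hx
    rw [iid_eq_prod_pow, iid_eq_prod_pow, hnS, ← Finset.sum_neg_distrib,
      Real.exp_sum, ← Finset.prod_mul_distrib]
    refine Finset.prod_congr rfl fun a _ => ?_
    rw [hc a]
    rcases Nat.eq_zero_or_pos (cnt x0 a) with h0 | hpos
    · simp [h0]
    · have hqa : 0 < q a := by
        rw [hq, typeOf_eq_cnt]
        have h0 : (0:ℝ) < n := by exact_mod_cast Nat.pos_of_ne_zero hn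
        have h1 : (0:ℝ) < (cnt x0 a : ℝ) := by exact_mod_cast hpos
        positivity
      have : Real.exp (-((cnt x0 a : ℝ) * Real.log (q a / P0 a)))
          = (P0 a / q a) ^ (cnt x0 a) := by
        rw [neg_mul_eq_mul_neg, ← Real.log_inv, Real.exp_nat_mul, Real.exp_log
          (inv_pos.2 (div_pos hqa (hfs0 a)))]
        congr 1; field_simp
      rw [this, ← mul_pow]
      congr 1
      field_simp
  calc ∑ x ∈ Finset.univ.filter (fun x : Fin n → 𝒳 => typeOf x = typeOf x0), iid P0 x
      = (∑ x ∈ Finset.univ.filter (fun x : Fin n → 𝒳 => typeOf x = typeOf x0), iid q x)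
        * Real.exp (-((n : ℝ) * S)) := by
        rw [Finset.sum_mul]
        exact Finset.sum_congr rfl fun x hx =>
          hkey x (Finset.mem_filter.1 hx).2
    _ ≤ 1 * Real.exp (-((n : ℝ) * S)) := by
        apply mul_le_mul_of_nonneg_right ?_ (Real.exp_pos _).le
        calc ∑ x ∈ Finset.univ.filter (fun x : Fin n → 𝒳 => typeOf x = typeOf x0), iid q x
            ≤ ∑ x : Fin n → 𝒳, iid q x :=
              Finset.sum_le_sum_of_subset_of_nonneg (Finset.filter_subset _ _)
                (fun x _ _ => iid_nonneg hqs.1 x)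
          _ = 1 := sum_iid_eq_one hqs
    _ = Real.exp (-((n : ℝ) * S)) := one_mul _

lemma card_typeImage_le (n : ℕ) :
    ((Finset.univ : Finset (Fin n → 𝒳)).image typeOf).card
      ≤ (n+1) ^ (Fintype.card 𝒳) := by
  have hlt : ∀ (x : Fin n → 𝒳) (a : 𝒳), cnt x a < n + 1 :=
    fun x a => Nat.lt_succ_of_le (cnt_le x a)
  let Φ : (Fin n → 𝒳) → (𝒳 → Fin (n+1)) := fun x a => ⟨cnt x a, hlt x a⟩
  have hfact : (typeOf : (Fin n → 𝒳) → 𝒳 → ℝ)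
      = (fun c : 𝒳 → Fin (n+1) => fun a => ((c a : ℕ) : ℝ) / n) ∘ Φ := rfl
  rw [hfact, ← Finset.image_image]
  calc (Finset.image _ (Finset.image Φ Finset.univ)).card
      ≤ (Finset.image Φ Finset.univ).card := Finset.card_image_le
    _ ≤ Fintype.card (𝒳 → Fin (n+1)) := Finset.card_le_univ _
    _ = (n+1) ^ (Fintype.card 𝒳) := by simp

open Filter in
lemma floor_div_tendsto {r : ℝ} (hr : 0 ≤ r) :
    Tendsto (fun n : ℕ => ((⌊(n:ℝ) * r⌋₊ : ℝ) / n)) atTop (𝓝 r) := by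
  have hlow : Tendsto (fun n : ℕ => r - 1 / (n:ℝ)) atTop (𝓝 r) := by
    have := tendsto_one_div_atTop_nhds_zero_nat (𝕜 := ℝ)
    simpa using tendsto_const_nhds.sub this
  refine tendsto_of_tendsto_of_tendsto_of_le_of_le' hlow tendsto_const_nhds ?_ ?_
  · filter_upwards [eventually_gt_atTop 0] with n hn
    have hn' : (0:ℝ) < n := by exact_mod_cast hn
    have h1 : (n:ℝ) * r - 1 < (⌊(n:ℝ) * r⌋₊ : ℝ) := Nat.sub_one_lt_floor _
    have h2 : r - 1/(n:ℝ) = ((n:ℝ) * r - 1)/n := by field_simp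
    rw [h2]
    gcongr
  · filter_upwards [eventually_gt_atTop 0] with n hn
    have hn' : (0:ℝ) < n := by exact_mod_cast hn
    have h1 : (⌊(n:ℝ) * r⌋₊ : ℝ) ≤ (n:ℝ) * r := Nat.floor_le (by positivity)
    rw [div_le_iff₀ hn']
    linarith [h1]

open Filter in
lemma exists_good_string [Nonempty 𝒳] (P1 : 𝒳 → ℝ) (hP1 : P1 ∈ simplex 𝒳)
    (hfs1 : ∀ a, 0 < P1 a) {t : ℝ} (ht : 0 < t) :
    ∀ᶠ n : ℕ in atTop, ∃ x : Fin n → 𝒳,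
      ∑ a, typeOf x a * Real.log (typeOf x a / P1 a) ≤ t := by
  obtain ⟨a0⟩ := ‹Nonempty 𝒳›
  set c : ℕ → 𝒳 → ℕ := fun n a =>
    if a = a0 then n - ∑ b ∈ Finset.univ.erase a0, ⌊(n:ℝ) * P1 b⌋₊
    else ⌊(n:ℝ) * P1 a⌋₊ with hc
  have hsle : ∀ n : ℕ, (∑ b ∈ Finset.univ.erase a0, ⌊(n:ℝ) * P1 b⌋₊) ≤ n := by
    intro n
    have hcast : ((∑ b ∈ Finset.univ.erase a0, ⌊(n:ℝ) * P1 b⌋₊ : ℕ) : ℝ) ≤ (n:ℝ) := by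
      push_cast
      calc ∑ b ∈ Finset.univ.erase a0, ((⌊(n:ℝ) * P1 b⌋₊ : ℕ) : ℝ)
          ≤ ∑ b ∈ Finset.univ.erase a0, (n:ℝ) * P1 b :=
            Finset.sum_le_sum fun b _ =>
              Nat.floor_le (mul_nonneg (Nat.cast_nonneg n) (hfs1 b).le)
        _ ≤ ∑ b ∈ Finset.univ, (n:ℝ) * P1 b :=
            Finset.sum_le_sum_of_subset_of_nonneg (Finset.erase_subset _ _)
              (fun b _ _ => mul_nonneg (Nat.cast_nonneg n) (hfs1 b).le)
        _ = (n:ℝ) := by rw [← Finset.mul_sum, hP1.2, mul_one]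
    exact_mod_cast hcast
  have hsum : ∀ n : ℕ, ∑ a, c n a = n := by
    intro n
    rw [← Finset.add_sum_erase _ _ (Finset.mem_univ a0)]
    have h1 : c n a0 = n - ∑ b ∈ Finset.univ.erase a0, ⌊(n:ℝ) * P1 b⌋₊ := by
      simp [hc]
    have h2 : ∀ b ∈ Finset.univ.erase a0, c n b = ⌊(n:ℝ) * P1 b⌋₊ := by
      intro b hb
      simp [hc, (Finset.mem_erase.1 hb).1]
    rw [h1, Finset.sum_congr rfl h2]
    have := hsle n
    omega
  have hy : ∀ n : ℕ, ∃ x : Fin n → 𝒳, ∀ a, cnt x a = c n a :=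
    fun n => exists_string_s13 (c n) (hsum n)
  set y : ∀ n : ℕ, Fin n → 𝒳 := fun n => (hy n).choose with hydef
  have hcy : ∀ (n : ℕ) (a : 𝒳), cnt (y n) a = c n a := fun n => (hy n).choose_spec
  have htype : ∀ a, Tendsto (fun n : ℕ => typeOf (y n) a) atTop (𝓝 (P1 a)) := by
    intro a
    rcases eq_or_ne a a0 with rfl | ha
    · have hEq : ∀ᶠ n : ℕ in atTop, typeOf (y n) a
          = 1 - ∑ b ∈ Finset.univ.erase a, ((⌊(n:ℝ) * P1 b⌋₊ : ℝ) / n) := by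
        filter_upwards [eventually_gt_atTop 0] with n hn
        have hn' : (0:ℝ) < n := by exact_mod_cast hn
        rw [typeOf_eq_cnt, hcy n a]
        simp only [hc, if_pos rfl]
        rw [Nat.cast_sub (hsle n)]
        push_cast
        rw [sub_div, div_self hn'.ne', Finset.sum_div]
      have hlim : Tendsto (fun n : ℕ => 1 - ∑ b ∈ Finset.univ.erase a,
          ((⌊(n:ℝ) * P1 b⌋₊ : ℝ) / n)) atTop
          (𝓝 (1 - ∑ b ∈ Finset.univ.erase a, P1 b)) :=
        tendsto_const_nhds.sub
          (tendsto_finset_sum _ fun b _ => floor_div_tendsto (hfs1 b).le)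
      have hval : (1 : ℝ) - ∑ b ∈ Finset.univ.erase a, P1 b = P1 a := by
        have h3 := Finset.add_sum_erase Finset.univ P1 (Finset.mem_univ a)
        rw [hP1.2] at h3
        linarith
      rw [← hval]
      exact hlim.congr' (by filter_upwards [hEq] with n h using h.symm)
    · have hEq : ∀ n : ℕ, typeOf (y n) a = (⌊(n:ℝ) * P1 a⌋₊ : ℝ) / n := by
        intro n; rw [typeOf_eq_cnt, hcy n a]; simp [hc, ha]
      exact (floor_div_tendsto (hfs1 a).le).congr (fun n => (hEq n).symm)
  have hKL : Tendsto (fun n : ℕ => ∑ a, typeOf (y n) a *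
      Real.log (typeOf (y n) a / P1 a)) atTop (𝓝 0) := by
    have hterm : ∀ a : 𝒳, Tendsto (fun n : ℕ => typeOf (y n) a *
        Real.log (typeOf (y n) a / P1 a)) atTop (𝓝 0) := by
      intro a
      have h1 : Tendsto (fun n : ℕ => typeOf (y n) a / P1 a) atTop (𝓝 1) := by
        have := (htype a).div_const (P1 a)
        rwa [div_self (hfs1 a).ne'] at this
      have h2 : Tendsto (fun n : ℕ => Real.log (typeOf (y n) a / P1 a))
          atTop (𝓝 0) := by
        have hcont := (Real.continuousAt_log (one_ne_zero)).tendsto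
        have := hcont.comp h1
        simpa [Function.comp_def] using this
      simpa using (htype a).mul h2
    have := tendsto_finset_sum Finset.univ (fun a (_ : a ∈ Finset.univ) => hterm a)
    simpa using this
  filter_upwards [hKL.eventually_lt_const ht] with n h
  exact ⟨y n, h.le⟩

open Filter in
lemma log_succ_div_tendsto :
    Tendsto (fun n : ℕ => Real.log ((n:ℝ)+1) / n) atTop (𝓝 0) := by
  have h1 : Tendsto (fun x : ℝ => Real.log x / x) atTop (𝓝 0) := by
    simpa using Real.tendsto_pow_log_div_mul_add_atTop 1 0 1 one_ne_zero
  have h2 : Tendsto (fun x : ℝ => Real.log (x+1)/(x+1)) atTop (𝓝 0) :=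
    h1.comp (tendsto_atTop_add_const_right _ 1 tendsto_id)
  have h3 : Tendsto (fun x : ℝ => (x+1)/x) atTop (𝓝 1) := by
    have h4 : Tendsto (fun x : ℝ => 1 + 1/x) atTop (𝓝 (1+0)) := by
      refine tendsto_const_nhds.add ?_
      exact (tendsto_inv_atTop_zero (𝕜 := ℝ)).congr fun x => (one_div x).symm
    rw [add_zero] at h4
    refine h4.congr' ?_
    filter_upwards [eventually_gt_atTop (0:ℝ)] with x hx
    field_simp
  have h5 := h2.mul h3
  rw [zero_mul] at h5
  have h6 : Tendsto (fun x : ℝ => Real.log (x+1)/x) atTop (𝓝 0) := by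
    refine h5.congr' ?_
    filter_upwards [eventually_gt_atTop (0:ℝ)] with x hx
    field_simp
  exact h6.comp tendsto_natCast_atTop_atTop

end MainAux

open scoped Topology

/-- **Claim 5** (strong contamination achievability). -/
theorem claim5_strong_achievability {𝒳 : Type*} [Fintype 𝒳] [DecidableEq 𝒳]
    [Nonempty 𝒳]
    (P0 P1 : 𝒳 → ℝ) (hP0 : P0 ∈ simplex 𝒳) (hP1 : P1 ∈ simplex 𝒳)
    (hfs0 : ∀ x, 0 < P0 x) (hfs1 : ∀ x, 0 < P1 x) (hne : P0 ≠ P1)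
    {ε lam δ : ℝ} (hε : 0 < ε) (hε1 : ε < 1) (hlam : 0 < lam) (hδ : 0 < δ) :
    ((⨅ p ∈ simplex 𝒳, ⨅ q ∈ simplex 𝒳,
        ⨅ (_ : dTV q p ≤ ε), ⨅ (_ : KL p P1 ≤ ENNReal.ofReal (lam + δ)),
          KL q P0 : ℝ≥0∞) : EReal) ≤
      Filter.liminf (fun n : ℕ =>
        ((-(Real.log (EadvClaim5 P0 P1 ε (lam + δ) n)) / n : ℝ) : EReal))
        Filter.atTop := by
  classical
  set t : ℝ := lam + δ with htdef
  have ht : 0 < t := by positivity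
  set k : ℕ := Fintype.card 𝒳 with hk
  set f : (𝒳 → ℝ) → ℝ := fun q => ∑ a, q a * Real.log (q a / P0 a) with hf
  have hKLP0 : ∀ q : 𝒳 → ℝ, KL q P0 = ENNReal.ofReal (f q) := by
    intro q
    rw [KL, if_pos]
    intro a h
    exact absurd h (hfs0 a).ne'
  have hKLP1 : ∀ q : 𝒳 → ℝ,
      KL q P1 = ENNReal.ofReal (∑ a, q a * Real.log (q a / P1 a)) := by
    intro q
    rw [KL, if_pos]
    intro a h
    exact absurd h (hfs1 a).ne'
  set L' : ℝ≥0∞ := ⨅ p ∈ simplex 𝒳, ⨅ q ∈ simplex 𝒳,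
      ⨅ (_ : dTV q p ≤ ε), ⨅ (_ : KL p P1 ≤ ENNReal.ofReal t), KL q P0 with hL'
  have hL'le : ∀ q ∈ simplex 𝒳, ∀ p ∈ simplex 𝒳, dTV q p ≤ ε →
      KL p P1 ≤ ENNReal.ofReal t → L' ≤ KL q P0 := by
    intro q hq p hp h1 h2
    calc L' ≤ ⨅ q' ∈ simplex 𝒳, ⨅ (_ : dTV q' p ≤ ε),
          ⨅ (_ : KL p P1 ≤ ENNReal.ofReal t), KL q' P0 := iInf₂_le p hp
      _ ≤ ⨅ (_ : dTV q p ≤ ε), ⨅ (_ : KL p P1 ≤ ENNReal.ofReal t), KL q P0 :=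
          iInf₂_le q hq
      _ ≤ ⨅ (_ : KL p P1 ≤ ENNReal.ofReal t), KL q P0 := iInf_le _ h1
      _ ≤ KL q P0 := iInf_le _ h2
  have hKLself : KL P1 P1 ≤ ENNReal.ofReal t := by
    rw [hKLP1 P1]
    have hz : ∑ a, P1 a * Real.log (P1 a / P1 a) = 0 := by
      apply Finset.sum_eq_zero
      intro a _
      rw [div_self (hfs1 a).ne', Real.log_one, mul_zero]
    rw [hz]
    simp
  have hLtop : L' ≠ ⊤ := by
    refine ne_top_of_le_ne_top ?_
      (hL'le P1 hP1 P1 hP1 (by simp [dTV, hε.le]) hKLself)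
    rw [hKLP0]
    exact ENNReal.ofReal_ne_top
  set L : ℝ := L'.toReal with hL
  have hL0 : 0 ≤ L := ENNReal.toReal_nonneg
  have hLlef : ∀ q, q ∈ simplex 𝒳 →
      (∃ p ∈ simplex 𝒳, dTV q p ≤ ε ∧ KL p P1 ≤ ENNReal.ofReal t) → L ≤ f q := by
    rintro q hq ⟨p, hp, h1, h2⟩
    have h3 := hL'le q hq p hp h1 h2
    rw [hKLP0] at h3
    have h4 := ENNReal.toReal_mono ENNReal.ofReal_ne_top h3
    rwa [ENNReal.toReal_ofReal (gibbs_s13 hq hP0 hfs0)] at h4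
  have hmemid : ∀ n : ℕ,
      (∑ x : Fin n → 𝒳, iid P0 x *
        (if KL (typeOf x) P1 ≤ ENNReal.ofReal t then (1:ℝ) else 0)) ∈
      {e : ℝ | ∃ A : (Fin n → 𝒳) → Fin n → 𝒳,
        (∀ x, ((Finset.univ.filter fun i => A x i ≠ x i).card : ℝ) ≤ (n : ℝ) * ε) ∧
        e = ∑ x, iid P0 x *
          (if KL (typeOf (A x)) P1 ≤ ENNReal.ofReal t then (1 : ℝ) else 0)} := by
    intro n
    refine ⟨id, fun x => ?_, rfl⟩
    have hempty : (Finset.univ.filter fun i : Fin n => id x i ≠ x i) = ∅ := by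
      apply Finset.filter_false_of_mem
      intro i _
      simp
    rw [hempty]
    simp only [Finset.card_empty, Nat.cast_zero]
    positivity
  -- upper bound
  have hub : ∀ n : ℕ, 0 < n → EadvClaim5 P0 P1 ε t n
      ≤ ((n:ℝ)+1)^k * Real.exp (-((n:ℝ) * L)) := by
    intro n hn
    have hn0 : n ≠ 0 := hn.ne'
    have hn' : (0:ℝ) < n := by exact_mod_cast hn
    unfold EadvClaim5
    refine csSup_le ⟨_, hmemid n⟩ ?_
    rintro e ⟨A, hA, rfl⟩
    set Cp : (𝒳 → ℝ) → Prop := fun q => q ∈ simplex 𝒳 ∧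
      ∃ p ∈ simplex 𝒳, dTV q p ≤ ε ∧ KL p P1 ≤ ENNReal.ofReal t with hCp
    set T : Finset (Fin n → 𝒳) := Finset.univ.filter (fun x : Fin n → 𝒳 => Cp (typeOf x))
      with hT
    have hstep1 : ∀ x : Fin n → 𝒳,
        iid P0 x * (if KL (typeOf (A x)) P1 ≤ ENNReal.ofReal t then (1:ℝ) else 0)
          ≤ if Cp (typeOf x) then iid P0 x else 0 := by
      intro x
      by_cases hx : KL (typeOf (A x)) P1 ≤ ENNReal.ofReal t
      · rw [if_pos hx, mul_one, if_pos]
        refine ⟨typeOf_mem_simplex hn0 x, typeOf (A x), typeOf_mem_simplex hn0 (A x), ?_, hx⟩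
        refine (dTV_typeOf_le x (A x)).trans ?_
        have hcongr : (Finset.univ.filter fun i => ¬ (x i = A x i))
            = (Finset.univ.filter fun i => A x i ≠ x i) := by
          apply Finset.filter_congr
          intro i _
          simp [eq_comm]
        rw [hcongr, div_le_iff₀ hn']
        calc ((Finset.univ.filter fun i => A x i ≠ x i).card : ℝ)
            ≤ (n:ℝ) * ε := hA x
          _ = ε * n := mul_comm _ _
      · rw [if_neg hx, mul_zero]
        split
        · exact iid_nonneg (fun a => (hfs0 a).le) x
        · exact le_refl _
    calc ∑ x : Fin n → 𝒳, iid P0 x *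
          (if KL (typeOf (A x)) P1 ≤ ENNReal.ofReal t then (1:ℝ) else 0)
        ≤ ∑ x : Fin n → 𝒳, if Cp (typeOf x) then iid P0 x else 0 :=
          Finset.sum_le_sum fun x _ => hstep1 x
      _ = ∑ x ∈ T, iid P0 x := (Finset.sum_filter _ _).symm
      _ = ∑ q ∈ T.image typeOf, ∑ x ∈ T.filter (fun x => typeOf x = q), iid P0 x :=
          (Finset.sum_fiberwise_of_maps_to
            (fun x hx => Finset.mem_image_of_mem typeOf hx) _).symm
      _ ≤ ∑ _q ∈ T.image typeOf, Real.exp (-((n:ℝ) * L)) := by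
          apply Finset.sum_le_sum
          intro q hq
          obtain ⟨x0, hx0, rfl⟩ := Finset.mem_image.1 hq
          have hx0C : Cp (typeOf x0) := (Finset.mem_filter.1 hx0).2
          calc ∑ x ∈ T.filter (fun x => typeOf x = typeOf x0), iid P0 x
              ≤ ∑ x ∈ Finset.univ.filter
                  (fun x : Fin n → 𝒳 => typeOf x = typeOf x0), iid P0 x := by
                apply Finset.sum_le_sum_of_subset_of_nonneg
                · intro x hx
                  exact Finset.mem_filter.2 ⟨Finset.mem_univ x, (Finset.mem_filter.1 hx).2⟩
                · exact fun x _ _ => iid_nonneg (fun a => (hfs0 a).le) x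
            _ ≤ Real.exp (-((n:ℝ) * f (typeOf x0))) := typeSum_le hn0 P0 hfs0 x0
            _ ≤ Real.exp (-((n:ℝ) * L)) := by
                apply Real.exp_le_exp.2
                apply neg_le_neg
                exact mul_le_mul_of_nonneg_left (hLlef (typeOf x0) hx0C.1 hx0C.2) hn'.le
      _ = ((T.image typeOf).card : ℝ) * Real.exp (-((n:ℝ) * L)) := by
          rw [Finset.sum_const, nsmul_eq_mul]
      _ ≤ ((n:ℝ)+1)^k * Real.exp (-((n:ℝ) * L)) := by
          apply mul_le_mul_of_nonneg_right ?_ (Real.exp_pos _).le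
          have hcard : (T.image typeOf).card ≤ (n+1)^k :=
            le_trans (Finset.card_le_card
              (Finset.image_subset_image (Finset.filter_subset _ _)))
              (card_typeImage_le n)
          calc ((T.image typeOf).card : ℝ) ≤ (((n+1)^k : ℕ) : ℝ) := by exact_mod_cast hcard
            _ = ((n:ℝ)+1)^k := by push_cast; ring
  -- eventual positivity
  have hpos : ∀ᶠ n : ℕ in atTop, 0 < EadvClaim5 P0 P1 ε t n := by
    filter_upwards [exists_good_string P1 hP1 hfs1 ht] with n hex
    obtain ⟨x0, hx0⟩ := hex
    have hind : KL (typeOf x0) P1 ≤ ENNReal.ofReal t := by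
      rw [hKLP1]
      exact ENNReal.ofReal_le_ofReal hx0
    have hBdd : BddAbove {e : ℝ | ∃ A : (Fin n → 𝒳) → Fin n → 𝒳,
        (∀ x, ((Finset.univ.filter fun i => A x i ≠ x i).card : ℝ) ≤ (n : ℝ) * ε) ∧
        e = ∑ x, iid P0 x *
          (if KL (typeOf (A x)) P1 ≤ ENNReal.ofReal t then (1 : ℝ) else 0)} := by
      refine ⟨1, ?_⟩
      rintro e ⟨A, hA, rfl⟩
      calc ∑ x : Fin n → 𝒳, iid P0 x *
            (if KL (typeOf (A x)) P1 ≤ ENNReal.ofReal t then (1:ℝ) else 0)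
          ≤ ∑ x : Fin n → 𝒳, iid P0 x := by
            apply Finset.sum_le_sum
            intro x _
            by_cases hx : KL (typeOf (A x)) P1 ≤ ENNReal.ofReal t
            · rw [if_pos hx, mul_one]
            · rw [if_neg hx, mul_zero]
              exact iid_nonneg (fun a => (hfs0 a).le) x
        _ = 1 := sum_iid_eq_one hP0
    have h1 : iid P0 x0 ≤ ∑ x : Fin n → 𝒳, iid P0 x *
        (if KL (typeOf x) P1 ≤ ENNReal.ofReal t then (1:ℝ) else 0) := by
      have hmono : iid P0 x0 *
          (if KL (typeOf x0) P1 ≤ ENNReal.ofReal t then (1:ℝ) else 0)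
          ≤ ∑ x : Fin n → 𝒳, iid P0 x *
            (if KL (typeOf x) P1 ≤ ENNReal.ofReal t then (1:ℝ) else 0) :=
        Finset.single_le_sum (f := fun x : Fin n → 𝒳 => iid P0 x *
          (if KL (typeOf x) P1 ≤ ENNReal.ofReal t then (1:ℝ) else 0))
          (fun x _ => mul_nonneg (iid_nonneg (fun a => (hfs0 a).le) x)
            (by split <;> norm_num)) (Finset.mem_univ x0)
      rwa [if_pos hind, mul_one] at hmono
    have h2 : (0:ℝ) < iid P0 x0 := Finset.prod_pos fun i _ => hfs0 (x0 i)
    have h3 := le_csSup hBdd (hmemid n)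
    calc (0:ℝ) < iid P0 x0 := h2
      _ ≤ _ := h1
      _ ≤ EadvClaim5 P0 P1 ε t n := h3
  -- log ratio tendsto
  have hglim : Tendsto (fun n : ℕ => L - (k:ℝ) * (Real.log ((n:ℝ)+1) / n))
      atTop (𝓝 L) := by
    have h := (log_succ_div_tendsto.const_mul (k:ℝ))
    have h2 := (tendsto_const_nhds :
      Tendsto (fun _ : ℕ => L) atTop (𝓝 L)).sub h
    simpa using h2
  have hglimE : Tendsto (fun n : ℕ =>
      ((L - (k:ℝ) * (Real.log ((n:ℝ)+1) / n) : ℝ) : EReal)) atTop (𝓝 (L : EReal)) :=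
    EReal.tendsto_coe.2 hglim
  have hev : ∀ᶠ n : ℕ in atTop,
      ((L - (k:ℝ) * (Real.log ((n:ℝ)+1) / n) : ℝ) : EReal)
        ≤ ((-(Real.log (EadvClaim5 P0 P1 ε t n)) / n : ℝ) : EReal) := by
    filter_upwards [hpos, eventually_gt_atTop 0] with n hEpos hn
    have hn' : (0:ℝ) < n := by exact_mod_cast hn
    have hEub := hub n hn
    have hlogle : Real.log (EadvClaim5 P0 P1 ε t n)
        ≤ (k:ℝ) * Real.log ((n:ℝ)+1) - (n:ℝ) * L := by
      have h1 := Real.log_le_log hEpos hEub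
      rwa [Real.log_mul (by positivity) (Real.exp_ne_zero _), Real.log_exp,
        Real.log_pow, ← sub_eq_add_neg] at h1
    rw [EReal.coe_le_coe_iff]
    have hkey : -(Real.log (EadvClaim5 P0 P1 ε t n)) / n
        - (L - (k:ℝ) * (Real.log ((n:ℝ)+1) / n))
        = ((k:ℝ) * Real.log ((n:ℝ)+1) - (n:ℝ) * L
            - Real.log (EadvClaim5 P0 P1 ε t n)) / n := by
      field_simp
      ring
    rw [← sub_nonneg, hkey]
    apply div_nonneg _ hn'.le
    linarith
  have hliminf : ((L : ℝ) : EReal) ≤ Filter.liminf (fun n : ℕ =>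
      ((-(Real.log (EadvClaim5 P0 P1 ε t n)) / n : ℝ) : EReal)) Filter.atTop := by
    calc ((L : ℝ) : EReal)
        = Filter.liminf (fun n : ℕ =>
            ((L - (k:ℝ) * (Real.log ((n:ℝ)+1) / n) : ℝ) : EReal)) Filter.atTop :=
          (hglimE.liminf_eq).symm
      _ ≤ _ := Filter.liminf_le_liminf hev
  have hLHS : (L' : EReal) = ((L : ℝ) : EReal) := by
    rw [← ENNReal.ofReal_toReal hLtop, EReal.coe_ennreal_ofReal, max_eq_left hL0]
  rw [hLHS]
  exact hliminf

end
end

section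
/- (Appendix D continuity claim, achievability side.) Fix ε ∈ (0,1) and λ > 0. Define, for t ≥ 0, K(t) = min over p,q ∈ Δ satisfying d_TV(p,q) ≤ ε and D(p‖P₁) ≤ t of D(q‖P₀). Then lim_{δ→0⁺} K(λ+δ) = K(λ). -/
open scoped BigOperators ENNReal Classical
open Filter

noncomputable section

/-- `K(t) = min_{p,q ∈ Δ : d_TV(p,q) ≤ ε, D(p‖P1) ≤ t} D(q‖P0)`. -/
def Ksc {𝒳 : Type*} [Fintype 𝒳] (P0 P1 : 𝒳 → ℝ) (ε t : ℝ) : ℝ≥0∞ :=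
  ⨅ p ∈ simplex 𝒳, ⨅ q ∈ simplex 𝒳,
    ⨅ (_ : dTV p q ≤ ε), ⨅ (_ : KL p P1 ≤ ENNReal.ofReal t), KL q P0

/-! ### Auxiliary lemmas -/

section Aux

variable {𝒳 : Type*} [Fintype 𝒳]

lemma KL_eq_ofReal_s14 (p Q : 𝒳 → ℝ) (hQ : ∀ x, 0 < Q x) :
    KL p Q = ENNReal.ofReal (∑ x, p x * Real.log (p x / Q x)) :=
  if_pos fun x hx => absurd hx (hQ x).ne'

lemma KL_self (Q : 𝒳 → ℝ) (hQ : ∀ x, 0 < Q x) : KL Q Q = 0 := by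
  rw [KL_eq_ofReal_s14 _ _ hQ]
  have : ∀ x : 𝒳, Q x * Real.log (Q x / Q x) = 0 := by
    intro x
    rw [div_self (hQ x).ne', Real.log_one, mul_zero]
  simp [this]

lemma KL_ne_top (p Q : 𝒳 → ℝ) (hQ : ∀ x, 0 < Q x) : KL p Q ≠ ⊤ := by
  rw [KL_eq_ofReal_s14 _ _ hQ]; exact ENNReal.ofReal_ne_top

lemma term_convex {a s u c : ℝ} (ha : 0 ≤ a) (ha1 : a ≤ 1) (hs : 0 ≤ s) (hu : 0 ≤ u)
    (hc : 0 < c) :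
    ((1 - a) * s + a * u) * Real.log (((1 - a) * s + a * u) / c) ≤
      (1 - a) * (s * Real.log (s / c)) + a * (u * Real.log (u / c)) := by
  have key : ∀ t : ℝ, 0 ≤ t → t * Real.log (t / c) = t * Real.log t - Real.log c * t := by
    intro t ht
    rcases ht.eq_or_lt with h | h
    · simp [← h]
    · rw [Real.log_div h.ne' hc.ne']; ring
  have hm : 0 ≤ (1 - a) * s + a * u :=
    add_nonneg (mul_nonneg (by linarith) hs) (mul_nonneg ha hu)
  rw [key _ hm, key _ hs, key _ hu]
  have hconv := Real.convexOn_mul_log.2 (Set.mem_Ici.mpr hs) (Set.mem_Ici.mpr hu)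
    (by linarith : (0:ℝ) ≤ 1 - a) ha (by ring)
  simp only [smul_eq_mul] at hconv
  nlinarith [hconv]

lemma KL_mix_le {a : ℝ} (ha : 0 ≤ a) (ha1 : a ≤ 1) (p r Q : 𝒳 → ℝ)
    (hp : ∀ x, 0 ≤ p x) (hr : ∀ x, 0 ≤ r x) (hQ : ∀ x, 0 < Q x) :
    KL (mix a p r) Q ≤ ENNReal.ofReal (1 - a) * KL p Q + ENNReal.ofReal a * KL r Q := by
  rw [KL_eq_ofReal_s14 _ _ hQ, KL_eq_ofReal_s14 _ _ hQ, KL_eq_ofReal_s14 _ _ hQ]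
  have hsum : ∑ x, mix a p r x * Real.log (mix a p r x / Q x) ≤
      (1 - a) * ∑ x, p x * Real.log (p x / Q x) + a * ∑ x, r x * Real.log (r x / Q x) := by
    rw [Finset.mul_sum, Finset.mul_sum, ← Finset.sum_add_distrib]
    refine Finset.sum_le_sum fun x _ => ?_
    exact term_convex ha ha1 (hp x) (hr x) (hQ x)
  calc ENNReal.ofReal (∑ x, mix a p r x * Real.log (mix a p r x / Q x))
      ≤ ENNReal.ofReal ((1 - a) * ∑ x, p x * Real.log (p x / Q x)
          + a * ∑ x, r x * Real.log (r x / Q x)) := ENNReal.ofReal_le_ofReal hsum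
    _ ≤ ENNReal.ofReal ((1 - a) * ∑ x, p x * Real.log (p x / Q x))
          + ENNReal.ofReal (a * ∑ x, r x * Real.log (r x / Q x)) := ENNReal.ofReal_add_le
    _ = ENNReal.ofReal (1 - a) * ENNReal.ofReal (∑ x, p x * Real.log (p x / Q x))
          + ENNReal.ofReal a * ENNReal.ofReal (∑ x, r x * Real.log (r x / Q x)) := by
        rw [ENNReal.ofReal_mul (by linarith), ENNReal.ofReal_mul ha]

lemma mix_mem_simplex {a : ℝ} (ha : 0 ≤ a) (ha1 : a ≤ 1) {p r : 𝒳 → ℝ}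
    (hp : p ∈ simplex 𝒳) (hr : r ∈ simplex 𝒳) : mix a p r ∈ simplex 𝒳 := by
  refine ⟨fun x => add_nonneg (mul_nonneg (by linarith) (hp.1 x)) (mul_nonneg ha (hr.1 x)), ?_⟩
  simp only [mix]
  rw [Finset.sum_add_distrib, ← Finset.mul_sum, ← Finset.mul_sum, hp.2, hr.2]
  ring

lemma dTV_nonneg (p q : 𝒳 → ℝ) : 0 ≤ dTV p q :=
  div_nonneg (Finset.sum_nonneg fun x _ => abs_nonneg _) (by norm_num)

lemma dTV_mix {a : ℝ} (ha1 : a ≤ 1) (p q r : 𝒳 → ℝ) :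
    dTV (mix a p r) (mix a q r) = (1 - a) * dTV p q := by
  unfold dTV mix
  have hsum : ∑ x, |(1 - a) * p x + a * r x - ((1 - a) * q x + a * r x)|
      = (1 - a) * ∑ x, |p x - q x| := by
    rw [Finset.mul_sum]
    refine Finset.sum_congr rfl fun x _ => ?_
    have h : (1 - a) * p x + a * r x - ((1 - a) * q x + a * r x) = (1 - a) * (p x - q x) := by
      ring
    rw [h, abs_mul, abs_of_nonneg (by linarith : (0:ℝ) ≤ 1 - a)]
  rw [hsum]; ring

lemma Ksc_le_of_feasible (P0 P1 : 𝒳 → ℝ) (ε t : ℝ) {p q : 𝒳 → ℝ}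
    (hp : p ∈ simplex 𝒳) (hq : q ∈ simplex 𝒳) (hd : dTV p q ≤ ε)
    (hk : KL p P1 ≤ ENNReal.ofReal t) : Ksc P0 P1 ε t ≤ KL q P0 := by
  unfold Ksc
  exact iInf_le_of_le p <| iInf_le_of_le hp <| iInf_le_of_le q <| iInf_le_of_le hq <|
    iInf_le_of_le hd <| iInf_le_of_le hk le_rfl

lemma Ksc_antitone (P0 P1 : 𝒳 → ℝ) (ε : ℝ) {t t' : ℝ} (h : t ≤ t') :
    Ksc P0 P1 ε t' ≤ Ksc P0 P1 ε t := by
  refine le_iInf fun p => le_iInf fun hp => le_iInf fun q => le_iInf fun hq =>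
    le_iInf fun hd => le_iInf fun hk => ?_
  exact Ksc_le_of_feasible P0 P1 ε t' hp hq hd (hk.trans (ENNReal.ofReal_le_ofReal h))

end Aux

/-- **Appendix D continuity claim (achievability side)**: `K(λ+δ) → K(λ)` as `δ → 0⁺`. -/
theorem appendixD_continuity_achievability {𝒳 : Type*} [Fintype 𝒳] [Nonempty 𝒳]
    (P0 P1 : 𝒳 → ℝ) (hP0 : P0 ∈ simplex 𝒳) (hP1 : P1 ∈ simplex 𝒳)
    (hfs0 : ∀ x, 0 < P0 x) (hfs1 : ∀ x, 0 < P1 x) (hne : P0 ≠ P1)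
    {ε lam : ℝ} (hε : 0 < ε) (hε1 : ε < 1) (hlam : 0 < lam) :
    Filter.Tendsto (fun δ : ℝ => Ksc P0 P1 ε (lam + δ))
      (nhdsWithin 0 (Set.Ioi 0)) (nhds (Ksc P0 P1 ε lam)) := by
  set C : ℝ≥0∞ := KL P1 P0 with hC_def
  have hC : C ≠ ⊤ := KL_ne_top P1 P0 hfs0
  -- K(lam) is finite
  have hKle : ∀ t : ℝ, Ksc P0 P1 ε t ≤ C := by
    intro t
    refine Ksc_le_of_feasible P0 P1 ε t hP1 hP1 ?_ ?_
    · simp [dTV, le_of_lt hε]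
    · rw [KL_self P1 hfs1]; exact zero_le
  have hfin : Ksc P0 P1 ε lam ≠ ⊤ := fun h => hC (top_le_iff.mp (h ▸ hKle lam))
  -- upper bound: monotonicity
  have hub : ∀ δ : ℝ, 0 ≤ δ → Ksc P0 P1 ε (lam + δ) ≤ Ksc P0 P1 ε lam :=
    fun δ hδ => Ksc_antitone P0 P1 ε (by linarith)
  -- lower bound via mixing
  have hlb : ∀ δ : ℝ, 0 < δ →
      Ksc P0 P1 ε lam ≤ Ksc P0 P1 ε (lam + δ) + ENNReal.ofReal (δ / (lam + δ)) * C := by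
    intro δ hδ
    set a : ℝ := δ / (lam + δ) with ha_def
    have hden : 0 < lam + δ := by linarith
    have ha0 : 0 ≤ a := div_nonneg hδ.le hden.le
    have ha1 : a ≤ 1 := by
      rw [ha_def, div_le_one hden]; linarith
    have h1a : (1 - a) * (lam + δ) = lam := by
      rw [ha_def]; field_simp; ring
    rw [← tsub_le_iff_right]
    refine le_iInf fun p => le_iInf fun hp => le_iInf fun q => le_iInf fun hq =>
      le_iInf fun hd => le_iInf fun hk => ?_
    rw [tsub_le_iff_right]
    -- feasible pair (mix a p P1, mix a q P1) at level lam
    have hp' : mix a p P1 ∈ simplex 𝒳 := mix_mem_simplex ha0 ha1 hp hP1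
    have hq' : mix a q P1 ∈ simplex 𝒳 := mix_mem_simplex ha0 ha1 hq hP1
    have hd' : dTV (mix a p P1) (mix a q P1) ≤ ε := by
      rw [dTV_mix ha1]
      calc (1 - a) * dTV p q ≤ dTV p q :=
            mul_le_of_le_one_left (dTV_nonneg p q) (by linarith)
        _ ≤ ε := hd
    have hk' : KL (mix a p P1) P1 ≤ ENNReal.ofReal lam := by
      calc KL (mix a p P1) P1
          ≤ ENNReal.ofReal (1 - a) * KL p P1 + ENNReal.ofReal a * KL P1 P1 :=
            KL_mix_le ha0 ha1 p P1 P1 hp.1 hP1.1 hfs1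
        _ = ENNReal.ofReal (1 - a) * KL p P1 := by rw [KL_self P1 hfs1]; simp
        _ ≤ ENNReal.ofReal (1 - a) * ENNReal.ofReal (lam + δ) :=
            mul_le_mul_right hk _
        _ = ENNReal.ofReal ((1 - a) * (lam + δ)) :=
            (ENNReal.ofReal_mul (by linarith)).symm
        _ = ENNReal.ofReal lam := by rw [h1a]
    calc Ksc P0 P1 ε lam ≤ KL (mix a q P1) P0 :=
          Ksc_le_of_feasible P0 P1 ε lam hp' hq' hd' hk'
      _ ≤ ENNReal.ofReal (1 - a) * KL q P0 + ENNReal.ofReal a * C :=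
          KL_mix_le ha0 ha1 q P1 P0 hq.1 hP1.1 hfs0
      _ ≤ 1 * KL q P0 + ENNReal.ofReal a * C := by
          gcongr
          exact ENNReal.ofReal_le_one.mpr (by linarith)
      _ = KL q P0 + ENNReal.ofReal a * C := by rw [one_mul]
  -- the correction term tends to 0
  have hT : Filter.Tendsto (fun δ : ℝ => ENNReal.ofReal (δ / (lam + δ)) * C)
      (nhdsWithin 0 (Set.Ioi 0)) (nhds 0) := by
    have h1 : Filter.Tendsto (fun δ : ℝ => δ / (lam + δ)) (nhdsWithin 0 (Set.Ioi 0))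
        (nhds 0) := by
      have hc : ContinuousAt (fun δ : ℝ => δ / (lam + δ)) 0 := by
        apply ContinuousAt.div continuousAt_id (continuousAt_const.add continuousAt_id)
        simpa using hlam.ne'
      have := hc.tendsto.mono_left (nhdsWithin_le_nhds (s := Set.Ioi (0:ℝ)))
      simpa using this
    have h2 : Filter.Tendsto (fun δ : ℝ => ENNReal.ofReal (δ / (lam + δ)))
        (nhdsWithin 0 (Set.Ioi 0)) (nhds 0) := by
      have := (ENNReal.continuous_ofReal.continuousAt (x := (0:ℝ))).tendsto.comp h1
      simpa [Function.comp_def] using this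
    simpa using ENNReal.Tendsto.mul_const h2 (Or.inr hC)
  rw [ENNReal.tendsto_nhds hfin]
  intro η hη
  have hev1 : ∀ᶠ δ : ℝ in nhdsWithin 0 (Set.Ioi 0),
      ENNReal.ofReal (δ / (lam + δ)) * C < η := hT.eventually_lt_const hη
  filter_upwards [hev1, self_mem_nhdsWithin] with δ hδ1 hδ2
  have hδ : (0:ℝ) < δ := hδ2
  constructor
  · rw [tsub_le_iff_right]
    exact (hlb δ hδ).trans (add_le_add_right hδ1.le _)
  · exact (hub δ hδ.le).trans le_self_add

end
end
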